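/- arXiv:2209.06595 — 5 statements merged into one kernel-verified Lean document; each statement's English description precedes it below -/
import Mathlib

section
/- Let G : C → D be an exact functor between exact categories and let (D, D_‡, D^‡) be a sub-exact structure of the exact structure on D. Define C_‡ (resp. C^‡) to be the class of inflations (resp. deflations) of C whose image under G lies in D_‡ (resp. D^‡). Then (C, C_‡, C^‡) is an exact structure on C, it is a sub-exact structure of the original one, and G defines an exact functor (C, C_‡, C^‡) → (D, D_‡, D^‡). -/
/-!
STATEMENT 5: Let G : C → D be an exact functor between exact categories and let
(D, D_‡, D^‡) be a sub-exact structure of the exact structure on D.  Define C_‡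
(resp. C^‡) to be the class of inflations (resp. deflations) of C whose image under
G lies in D_‡ (resp. D^‡).  Then (C, C_‡, C^‡) is an exact structure on C, a
sub-exact structure of the original one, and G is an exact functor
(C, C_‡, C^‡) → (D, D_‡, D^‡).

We use the Barwick-style axioms for an exact structure (as in the paper's
∞-categorical definition, interpreted 1-categorically).
-/

open CategoryTheory Limits

namespace Stmt5

universe v u

/-- An exact structure (inflations and deflations satisfying the Barwick axioms)
on an additive category. -/
structure ExactStruct (C : Type u) [Category.{v} C] [Preadditive C]
    [HasZeroObject C] where
  infl : MorphismProperty C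
  defl : MorphismProperty C
  infl_comp : ∀ {X Y Z : C} (f : X ⟶ Y) (g : Y ⟶ Z), infl f → infl g → infl (f ≫ g)
  defl_comp : ∀ {X Y Z : C} (f : X ⟶ Y) (g : Y ⟶ Z), defl f → defl g → defl (f ≫ g)
  infl_from_zero : ∀ {O X : C} (f : O ⟶ X), IsZero O → infl f
  defl_to_zero : ∀ {X O : C} (f : X ⟶ O), IsZero O → defl f
  pushout_infl : ∀ {X Y X' : C} (i : X ⟶ Y) (f : X ⟶ X'), infl i →
    ∃ (Y' : C) (i' : X' ⟶ Y') (g : Y ⟶ Y'), IsPushout f i i' g ∧ infl i'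
  pullback_defl : ∀ {Y Z Z' : C} (p : Y ⟶ Z) (f : Z' ⟶ Z), defl p →
    ∃ (Y' : C) (p' : Y' ⟶ Z') (g : Y' ⟶ Y), IsPullback g p' p f ∧ defl p'
  bicartesian : ∀ {X Y X' Y' : C} (a : X ⟶ Y) (b : X ⟶ X') (c : Y ⟶ Y') (d : X' ⟶ Y'),
    (IsPullback a b c d ∧ infl c ∧ defl d) ↔ (IsPushout a b c d ∧ infl b ∧ defl a)

/-- A conflation of an exact structure: an inflation followed by a deflation which is
its cokernel (equivalently, a fiber–cofiber sequence with exact legs). -/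
def ExactStruct.IsConflation {C : Type u} [Category.{v} C] [Preadditive C]
    [HasZeroObject C] (E : ExactStruct C) {X Y Z : C} (i : X ⟶ Y) (p : Y ⟶ Z) : Prop :=
  E.infl i ∧ E.defl p ∧ ∃ w : i ≫ p = 0,
    Nonempty (IsColimit (CokernelCofork.ofπ p w)) ∧
    Nonempty (IsLimit (KernelFork.ofι i w))

/-- `E'` is a sub-exact structure of `E`. -/
def ExactStruct.Sub {C : Type u} [Category.{v} C] [Preadditive C] [HasZeroObject C]
    (E' E : ExactStruct C) : Prop :=
  (∀ {X Y : C} (f : X ⟶ Y), E'.infl f → E.infl f) ∧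
  (∀ {X Y : C} (f : X ⟶ Y), E'.defl f → E.defl f)

/-- An exact functor between exact categories: it preserves zero objects,
inflations, deflations and conflations. -/
def IsExactFunctor {C D : Type u} [Category.{v} C] [Preadditive C] [HasZeroObject C]
    [Category.{v} D] [Preadditive D] [HasZeroObject D]
    (G : C ⥤ D) (EC : ExactStruct C) (ED : ExactStruct D) : Prop :=
  (∀ X : C, IsZero X → IsZero (G.obj X)) ∧
  (∀ {X Y : C} (f : X ⟶ Y), EC.infl f → ED.infl (G.map f)) ∧
  (∀ {X Y : C} (f : X ⟶ Y), EC.defl f → ED.defl (G.map f)) ∧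
  (∀ {X Y Z : C} (i : X ⟶ Y) (p : Y ⟶ Z),
    EC.IsConflation i p → ED.IsConflation (G.map i) (G.map p))

/-! ### Auxiliary lemmas -/

section Aux

open ZeroObject

variable {C : Type u} [Category.{v} C] [Preadditive C] [HasZeroObject C]

/-- Transport a pushout square along an isomorphism on the pushout corner. -/
lemma isPushout_comp_iso {Z X Y P P' : C} {f : Z ⟶ X} {g : Z ⟶ Y} {inl : X ⟶ P}
    {inr : Y ⟶ P} (h : IsPushout f g inl inr) (e : P ⟶ P') [IsIso e] :
    IsPushout f g (inl ≫ e) (inr ≫ e) := by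
  refine IsPushout.of_isColimit (PushoutCocone.IsColimit.mk
    (by rw [← Category.assoc, h.w, Category.assoc])
    (fun s => inv e ≫ h.desc s.inl s.inr s.condition) (fun s => ?_) (fun s => ?_)
    (fun s m h1 h2 => ?_))
  · simp
  · simp
  · have : e ≫ m = h.desc s.inl s.inr s.condition := by
      apply h.hom_ext
      · rw [← Category.assoc, h.inl_desc]; simpa using h1
      · rw [← Category.assoc, h.inr_desc]; simpa using h2
    rw [← this, IsIso.inv_hom_id_assoc]

/-- The biproduct is a pushout over the zero object. -/
lemma isPushout_biprod (X Y : C) [HasBinaryBiproduct X Y] :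
    IsPushout (0 : (0 : C) ⟶ X) (0 : (0 : C) ⟶ Y) biprod.inl biprod.inr := by
  refine IsPushout.of_isColimit (PushoutCocone.IsColimit.mk (by simp)
    (fun s => biprod.desc s.inl s.inr) (fun s => by simp) (fun s => by simp)
    (fun s m h1 h2 => ?_))
  apply biprod.hom_ext' <;> simpa

/-- The biproduct is a pullback over the zero object. -/
lemma isPullback_biprod (X Y : C) [HasBinaryBiproduct X Y] :
    IsPullback (biprod.fst : X ⊞ Y ⟶ X) (biprod.snd : X ⊞ Y ⟶ Y)
      (0 : X ⟶ (0 : C)) (0 : Y ⟶ (0 : C)) := by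
  refine IsPullback.of_isLimit (PullbackCone.IsLimit.mk (by simp)
    (fun s => biprod.lift s.fst s.snd) (fun s => by simp) (fun s => by simp)
    (fun s m h1 h2 => ?_))
  apply biprod.hom_ext <;> simpa

/-- `biprod.desc biprod.inl (i ≫ biprod.inr)` is the pushout of `i` along `biprod.inr`. -/
lemma isPushout_inr_desc {A B : C} (A' : C) (i : A ⟶ B) [HasBinaryBiproduct A' A]
    [HasBinaryBiproduct A' B] :
    IsPushout (biprod.inr : A ⟶ A' ⊞ A) i
      (biprod.desc biprod.inl (i ≫ biprod.inr)) (biprod.inr : B ⟶ A' ⊞ B) := by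
  refine IsPushout.of_isColimit (PushoutCocone.IsColimit.mk (biprod.inr_desc _ _)
    (fun s => biprod.desc (biprod.inl ≫ s.inl) s.inr) (fun s => ?_) (fun s => by simp)
    (fun s m h1 h2 => ?_))
  · show biprod.desc biprod.inl (i ≫ biprod.inr) ≫ _ = _
    apply biprod.hom_ext'
    · simp
    · simp only [biprod.inr_desc_assoc, Category.assoc, biprod.inr_desc]
      exact s.condition.symm
  · apply biprod.hom_ext'
    · have := biprod.inl ≫= (show biprod.desc biprod.inl (i ≫ biprod.inr) ≫ m = s.inl from h1)
      simpa using this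
    · simpa using h2

/-- Uniqueness of cokernels, as an isomorphism compatible with the projections. -/
lemma cokerPtIso {A B Q Q' : C} {m : A ⟶ B} {q : B ⟶ Q} {q' : B ⟶ Q'}
    {w : m ≫ q = 0} {w' : m ≫ q' = 0}
    (h : IsColimit (CokernelCofork.ofπ q w)) (h' : IsColimit (CokernelCofork.ofπ q' w')) :
    ∃ α : Q ⟶ Q', IsIso α ∧ q ≫ α = q' := by
  have d1 : q ≫ h.desc (CokernelCofork.ofπ q' w') = q' := by
    simpa using Cofork.IsColimit.π_desc h (t := CokernelCofork.ofπ q' w')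
  have d2 : q' ≫ h'.desc (CokernelCofork.ofπ q w) = q := by
    simpa using Cofork.IsColimit.π_desc h' (t := CokernelCofork.ofπ q w)
  refine ⟨h.desc (CokernelCofork.ofπ q' w'), ⟨h'.desc (CokernelCofork.ofπ q w), ?_, ?_⟩, d1⟩
  · apply Cofork.IsColimit.hom_ext h
    simp only [Cofork.π_ofπ]
    rw [← Category.assoc, d1, d2]; simp
  · apply Cofork.IsColimit.hom_ext h'
    simp only [Cofork.π_ofπ]
    rw [← Category.assoc, d2, d1]; simp

namespace ExactStruct

variable (E : ExactStruct C)

/-- Every isomorphism is an inflation. -/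
lemma infl_of_isIso {A B : C} (f : A ⟶ B) [IsIso f] : E.infl f := by
  have hpb : IsPullback (0 : A ⟶ (0 : C)) f (𝟙 (0 : C)) (0 : B ⟶ (0 : C)) := by
    refine IsPullback.of_isLimit (PullbackCone.IsLimit.mk (by simp)
      (fun s => s.snd ≫ inv f) (fun s => (isZero_zero C).eq_of_tgt _ _)
      (fun s => by simp) (fun s m h1 h2 => ?_))
    rw [← h2]; simp
  exact ((E.bicartesian (0 : A ⟶ (0 : C)) f (𝟙 (0 : C)) (0 : B ⟶ (0 : C))).mp
    ⟨hpb, E.infl_from_zero _ (isZero_zero C), E.defl_to_zero _ (isZero_zero C)⟩).2.1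

/-- Every isomorphism is a deflation. -/
lemma defl_of_isIso {A B : C} (f : A ⟶ B) [IsIso f] : E.defl f := by
  have hpo : IsPushout (𝟙 (0 : C)) (0 : (0 : C) ⟶ A) (0 : (0 : C) ⟶ B) f := by
    refine IsPushout.of_isColimit (PushoutCocone.IsColimit.mk (by simp)
      (fun s => inv f ≫ s.inr) (fun s => (isZero_zero C).eq_of_src _ _)
      (fun s => by simp) (fun s m h1 h2 => ?_))
    rw [← h2]; simp
  exact ((E.bicartesian (𝟙 (0 : C)) (0 : (0 : C) ⟶ A) (0 : (0 : C) ⟶ B) f).mpr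
    ⟨hpo, E.infl_from_zero _ (isZero_zero C), E.defl_to_zero _ (isZero_zero C)⟩).2.2

include E in
lemma hasBinaryBiproducts : HasBinaryBiproducts C := by
  constructor
  intro X Y
  obtain ⟨Q, i', g, hpo, -⟩ := E.pushout_infl (0 : (0 : C) ⟶ Y) (0 : (0 : C) ⟶ X)
    (E.infl_from_zero _ (isZero_zero C))
  haveI : HasBinaryCoproduct X Y := HasColimit.mk ⟨BinaryCofan.mk i' g,
    BinaryCofan.isColimitMk
      (fun s => hpo.desc s.inl s.inr ((isZero_zero C).eq_of_src _ _))
      (fun s => hpo.inl_desc _ _ _) (fun s => hpo.inr_desc _ _ _)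
      (fun s m h1 h2 => hpo.hom_ext
        (h1.trans (hpo.inl_desc _ _ _).symm) (h2.trans (hpo.inr_desc _ _ _).symm))⟩
  exact HasBinaryBiproduct.of_hasBinaryCoproduct X Y

section Biprod

variable [HasBinaryBiproducts C]

lemma infl_inl (X Y : C) : E.infl (biprod.inl : X ⟶ X ⊞ Y) := by
  obtain ⟨Q, i', g, hpo, hi'⟩ := E.pushout_infl (0 : (0 : C) ⟶ Y) (0 : (0 : C) ⟶ X)
    (E.infl_from_zero _ (isZero_zero C))
  have he := hpo.inl_isoIsPushout_hom _ _ (isPushout_biprod X Y)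
  rw [← he]
  exact E.infl_comp _ _ hi' (E.infl_of_isIso _)

lemma infl_inr (X Y : C) : E.infl (biprod.inr : Y ⟶ X ⊞ Y) := by
  obtain ⟨Q, i', g, hpo, hi'⟩ := E.pushout_infl (0 : (0 : C) ⟶ X) (0 : (0 : C) ⟶ Y)
    (E.infl_from_zero _ (isZero_zero C))
  have he := hpo.inl_isoIsPushout_hom _ _ (isPushout_biprod X Y).flip
  rw [← he]
  exact E.infl_comp _ _ hi' (E.infl_of_isIso _)

lemma defl_fst (X Y : C) : E.defl (biprod.fst : X ⊞ Y ⟶ X) := by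
  obtain ⟨Y₀, p', g₀, hpb, hp'⟩ := E.pullback_defl (0 : Y ⟶ (0 : C)) (0 : X ⟶ (0 : C))
    (E.defl_to_zero _ (isZero_zero C))
  have he := hpb.isoIsPullback_inv_snd _ _ (isPullback_biprod X Y).flip
  rw [← he]
  exact E.defl_comp _ _ (E.defl_of_isIso _) hp'

lemma defl_snd (X Y : C) : E.defl (biprod.snd : X ⊞ Y ⟶ Y) := by
  obtain ⟨Y₀, p', g₀, hpb, hp'⟩ := E.pullback_defl (0 : X ⟶ (0 : C)) (0 : Y ⟶ (0 : C))
    (E.defl_to_zero _ (isZero_zero C))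
  have he := hpb.isoIsPullback_inv_snd _ _ (isPullback_biprod X Y)
  rw [← he]
  exact E.defl_comp _ _ (E.defl_of_isIso _) hp'

lemma infl_desc_inl {A B : C} (A' : C) {i : A ⟶ B} (hi : E.infl i) :
    E.infl (biprod.desc biprod.inl (i ≫ biprod.inr) : A' ⊞ A ⟶ A' ⊞ B) := by
  obtain ⟨Q, ii, gg, hpo, hii⟩ := E.pushout_infl i (biprod.inr : A ⟶ A' ⊞ A) hi
  have he := hpo.inl_isoIsPushout_hom _ _ (isPushout_inr_desc A' i)
  rw [← he]
  exact E.infl_comp _ _ hii (E.infl_of_isIso _)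

end Biprod

/-- Cofiber of an inflation. -/
lemma cofiber {A B : C} {i : A ⟶ B} (hi : E.infl i) :
    ∃ (Q : C) (q : B ⟶ Q), E.IsConflation i q := by
  obtain ⟨Q, i₀, q, hpo, hi₀⟩ := E.pushout_infl i (0 : A ⟶ (0 : C)) hi
  obtain ⟨hpb, -, hq⟩ := (E.bicartesian (0 : A ⟶ (0 : C)) i i₀ q).mpr
    ⟨hpo, hi, E.defl_to_zero _ (isZero_zero C)⟩
  have w : i ≫ q = 0 := by rw [← hpo.w]; simp
  refine ⟨Q, q, hi, hq, w, ⟨CokernelCofork.IsColimit.ofπ q w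
    (fun g' hg' => hpo.desc 0 g' (by simp [hg']))
    (fun g' hg' => hpo.inr_desc _ _ _)
    (fun g' hg' m hm => hpo.hom_ext ((isZero_zero C).eq_of_src _ _)
      (by rw [hpo.inr_desc]; exact hm))⟩, ⟨KernelFork.IsLimit.ofι i w
    (fun k hk => hpb.lift 0 k (by simp [hk]))
    (fun k hk => hpb.lift_snd _ _ _)
    (fun k hk m hm => hpb.hom_ext ((isZero_zero C).eq_of_tgt _ _)
      (by rw [hpb.lift_snd]; exact hm))⟩⟩

/-- Fiber of a deflation. -/
lemma fiber {B Z : C} {p : B ⟶ Z} (hp : E.defl p) :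
    ∃ (K : C) (k : K ⟶ B), E.IsConflation k p := by
  obtain ⟨K, p₀, k, hpb, -⟩ := E.pullback_defl p (0 : (0 : C) ⟶ Z) hp
  obtain ⟨hpo, hk, -⟩ := (E.bicartesian p₀ k (0 : (0 : C) ⟶ Z) p).mp
    ⟨hpb.flip, E.infl_from_zero _ (isZero_zero C), hp⟩
  have w : k ≫ p = 0 := by rw [← hpb.flip.w]; simp
  refine ⟨K, k, hk, hp, w, ⟨CokernelCofork.IsColimit.ofπ p w
    (fun g' hg' => hpo.desc 0 g' (by simp [hg']))
    (fun g' hg' => hpo.inr_desc _ _ _)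
    (fun g' hg' m hm => hpo.hom_ext ((isZero_zero C).eq_of_src _ _)
      (by rw [hpo.inr_desc]; exact hm))⟩, ⟨KernelFork.IsLimit.ofι k w
    (fun t ht => hpb.flip.lift 0 t (by simp [ht]))
    (fun t ht => hpb.flip.lift_snd _ _ _)
    (fun t ht m hm => hpb.flip.hom_ext ((isZero_zero C).eq_of_tgt _ _)
      (by rw [hpb.flip.lift_snd]; exact hm))⟩⟩

/-- If `i` is an inflation and `p` is a cokernel of `i`, then `(i, p)` is a conflation. -/
lemma isConflation_of_coker {A B Q : C} {i : A ⟶ B} {p : B ⟶ Q} (hi : E.infl i)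
    (w : i ≫ p = 0) (h : IsColimit (CokernelCofork.ofπ p w)) : E.IsConflation i p := by
  obtain ⟨Q', q, -, hq, w', hco, hke⟩ := E.cofiber hi
  obtain ⟨α, hα, hqα⟩ := cokerPtIso hco.some h
  haveI := hα
  refine ⟨hi, by rw [← hqα]; exact E.defl_comp _ _ hq (E.defl_of_isIso α), w, ⟨h⟩, ⟨?_⟩⟩
  have := isKernelCompMono hke.some α hqα.symm
  exact this

end ExactStruct

end Aux

/-! ### Pushouts of conflations -/

section Aux2

open ZeroObject

variable {C : Type u} [Category.{v} C] [Preadditive C] [HasZeroObject C]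

lemma epi_of_coker {X Y Q : C} {m : X ⟶ Y} {q : Y ⟶ Q} {w : m ≫ q = 0}
    (h : IsColimit (CokernelCofork.ofπ q w)) : Epi q := by
  have := epi_of_isColimit_cofork h
  simpa using this

lemma mono_of_ker {K X Y : C} {i : K ⟶ X} {p : X ⟶ Y} {w : i ≫ p = 0}
    (h : IsLimit (KernelFork.ofι i w)) : Mono i := by
  have := mono_of_isLimit_fork h
  simpa using this

lemma coker_desc_fac {X Y Q W : C} {m : X ⟶ Y} {q : Y ⟶ Q} {w : m ≫ q = 0}
    (h : IsColimit (CokernelCofork.ofπ q w)) (t : Y ⟶ W) (ht : m ≫ t = 0) :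
    q ≫ h.desc (CokernelCofork.ofπ t ht) = t := by
  simpa using Cofork.IsColimit.π_desc h (t := CokernelCofork.ofπ t ht)

/-- A cokernel of `biprod.lift f (-i)` gives a pushout square. -/
lemma isPushout_of_isColimit_cokernelCofork {A A' B Q : C} [HasBinaryBiproduct A' B]
    {f : A ⟶ A'} {i : A ⟶ B} {q : A' ⊞ B ⟶ Q} {w : biprod.lift f (-i) ≫ q = 0}
    (h : IsColimit (CokernelCofork.ofπ q w)) :
    IsPushout f i (biprod.inl ≫ q) (biprod.inr ≫ q) := by
  haveI : Epi q := epi_of_coker h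
  have sq : f ≫ biprod.inl ≫ q = i ≫ biprod.inr ≫ q := by
    have h1 := w
    rw [biprod.lift_eq] at h1
    simp only [Preadditive.add_comp, Preadditive.neg_comp, Category.assoc] at h1
    exact add_neg_eq_zero.mp h1
  refine IsPushout.of_isColimit (PushoutCocone.IsColimit.mk sq
    (fun s => h.desc (CokernelCofork.ofπ (biprod.desc s.inl s.inr)
      (by rw [biprod.lift_desc, s.condition]; simp)))
    (fun s => ?_) (fun s => ?_) (fun s m hm1 hm2 => ?_))
  · rw [Category.assoc, coker_desc_fac h, biprod.inl_desc]
  · rw [Category.assoc, coker_desc_fac h, biprod.inr_desc]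
  · refine (cancel_epi q).mp ?_
    rw [coker_desc_fac h]
    apply biprod.hom_ext'
    · rw [biprod.inl_desc, ← Category.assoc]; exact hm1
    · rw [biprod.inr_desc, ← Category.assoc]; exact hm2

namespace ExactStruct

variable (E : ExactStruct C)

/-- A morphism of conflations which is the identity on the cokernel parts gives a
pushout square (Bühler's Prop. 2.12/3.1 in the Barwick-axioms setting). -/
lemma isPushout_of_conflations [HasBinaryBiproducts C] {A B Z A' B' : C}
    {i : A ⟶ B} {p : B ⟶ Z} {i' : A' ⟶ B'} {p' : B' ⟶ Z} {f : A ⟶ A'} {g : B ⟶ B'}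
    (h1 : E.IsConflation i p) (h2 : E.IsConflation i' p') (sq : f ≫ i' = i ≫ g)
    (tri : g ≫ p' = p) : IsPushout f i i' g := by
  obtain ⟨hi, hp, wip, hco1, hke1⟩ := h1
  obtain ⟨hi', hp', wip', hco2, hke2⟩ := h2
  haveI hEp : Epi p := epi_of_coker hco1.some
  haveI hMi' : Mono i' := mono_of_ker hke2.some
  -- `biprod.lift f (-i)` is an inflation
  have hneg : E.infl (-i) := by
    haveI : IsIso (-𝟙 B) := ⟨⟨-𝟙 B, by simp, by simp⟩⟩
    have hh : (-i) = i ≫ (-𝟙 B) := by simp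
    rw [hh]; exact E.infl_comp _ _ hi (E.infl_of_isIso _)
  have hm : E.infl (biprod.lift f (-i)) := by
    have hu : ((biprod.snd ≫ f ≫ biprod.inl) ≫ (biprod.snd ≫ f ≫ biprod.inl) :
        A' ⊞ A ⟶ A' ⊞ A) = 0 := by simp
    haveI : IsIso (𝟙 (A' ⊞ A) + biprod.snd ≫ f ≫ biprod.inl) :=
      ⟨⟨𝟙 (A' ⊞ A) - biprod.snd ≫ f ≫ biprod.inl,
        by simp [Preadditive.comp_add, Preadditive.add_comp, Preadditive.comp_sub, Preadditive.sub_comp, hu],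
        by simp [Preadditive.comp_add, Preadditive.add_comp, Preadditive.comp_sub, Preadditive.sub_comp, hu]⟩⟩
    have hcomp : biprod.inr ≫ (𝟙 (A' ⊞ A) + biprod.snd ≫ f ≫ biprod.inl)
        = biprod.lift f (𝟙 A) := by
      apply biprod.hom_ext <;> simp [Preadditive.comp_add]
    have hfact : biprod.lift f (𝟙 A) ≫ biprod.desc biprod.inl ((-i) ≫ biprod.inr)
        = biprod.lift f (-i) := by
      rw [biprod.lift_desc]; apply biprod.hom_ext <;> simp
    rw [← hfact, ← hcomp]
    exact E.infl_comp _ _ (E.infl_comp _ _ (E.infl_inr A' A) (E.infl_of_isIso _))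
      (E.infl_desc_inl A' hneg)
  -- its cofiber
  obtain ⟨B'', q, confmq⟩ := E.cofiber hm
  obtain ⟨-, hqdefl, wmq, hcoq, hkeq⟩ := confmq
  haveI hEq : Epi q := epi_of_coker hcoq.some
  have hpoAux : IsPushout f i (biprod.inl ≫ q) (biprod.inr ≫ q) :=
    isPushout_of_isColimit_cokernelCofork hcoq.some
  -- `biprod.inl ≫ q` is an inflation
  have hi''infl : E.infl (biprod.inl ≫ q) := by
    obtain ⟨Yt, it, gt, hpo2, hit⟩ := E.pushout_infl i f hi
    have he := hpo2.inl_isoIsPushout_hom _ _ hpoAux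
    rw [← he]; exact E.infl_comp _ _ hit (E.infl_of_isIso _)
  -- the comparison map θ
  obtain ⟨θ, hθ1, hθ2⟩ : ∃ θ : B'' ⟶ B',
      (biprod.inl ≫ q) ≫ θ = i' ∧ (biprod.inr ≫ q) ≫ θ = g :=
    ⟨hpoAux.desc i' g sq, hpoAux.inl_desc i' g sq, hpoAux.inr_desc i' g sq⟩
  have hθ1' : biprod.inl ≫ q ≫ θ = i' := by rw [← Category.assoc]; exact hθ1
  have hθ2' : biprod.inr ≫ q ≫ θ = g := by rw [← Category.assoc]; exact hθ2
  -- p'' := θ ≫ p'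
  have wq : q ≫ θ ≫ p' = biprod.desc 0 p := by
    apply biprod.hom_ext'
    · simp only [← Category.assoc]
      rw [hθ1]
      simp [wip']
    · simp only [← Category.assoc]
      rw [hθ2]
      simp [tri]
  have w'' : (biprod.inl ≫ q) ≫ θ ≫ p' = 0 := by
    rw [Category.assoc, wq, biprod.inl_desc]
  haveI hepiP : Epi (θ ≫ p') := by
    refine Preadditive.epi_of_cancel_zero _ (fun x hx => ?_)
    have hx' : θ ≫ p' ≫ x = 0 := by rw [← Category.assoc]; exact hx
    have h3 : biprod.desc (0 : A' ⟶ Z) p ≫ x = 0 := by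
      rw [← wq]
      simp only [Category.assoc]
      rw [← Category.assoc θ p' x, hx, comp_zero]
    have h4 : p ≫ x = 0 := by
      have h5 := biprod.inr ≫= h3
      simpa using h5
    exact zero_of_epi_comp p h4
  -- θ ≫ p' is a cokernel of biprod.inl ≫ q
  have hcoP : IsColimit (CokernelCofork.ofπ (θ ≫ p') w'') := by
    refine CokernelCofork.IsColimit.ofπ' _ _ (fun t ht => ⟨hco1.some.desc
      (CokernelCofork.ofπ ((biprod.inr ≫ q) ≫ t)
        (by rw [← Category.assoc, ← hpoAux.w, Category.assoc, ht, comp_zero])), ?_⟩)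
    refine (cancel_epi q).mp ?_
    rw [← Category.assoc, wq]
    apply biprod.hom_ext'
    · rw [← Category.assoc, biprod.inl_desc, zero_comp, ← Category.assoc, ht]
    · rw [← Category.assoc, biprod.inr_desc, coker_desc_fac hco1.some, ← Category.assoc]
  have confP := E.isConflation_of_coker hi''infl w'' hcoP
  obtain ⟨-, hdeflP, wP, -, hkeP⟩ := confP
  -- θ is mono
  haveI hmθ : Mono θ := by
    refine Preadditive.mono_of_cancel_zero _ (fun k hk => ?_)
    have hkP : k ≫ θ ≫ p' = 0 := by rw [← Category.assoc, hk, zero_comp]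
    obtain ⟨k₁, hk₁⟩ := KernelFork.IsLimit.lift' hkeP.some k hkP
    rw [KernelFork.ι_ofι] at hk₁
    have h6 : k₁ ≫ i' = 0 := by
      rw [← hθ1, ← Category.assoc, hk₁, hk]
    have h7 : k₁ = 0 := zero_of_comp_mono i' h6
    rw [← hk₁, h7, zero_comp]
  -- the pullback of p' along θ ≫ p'
  obtain ⟨P₀, ρ, π, hpb0, hρ⟩ := E.pullback_defl (θ ≫ p') p' hdeflP
  have sqP : π ≫ θ ≫ p' = ρ ≫ p' := hpb0.w
  have hs := hpb0.lift_fst (𝟙 B'') θ (by simp)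
  have hs' := hpb0.lift_snd (𝟙 B'') θ (by simp)
  set s : B'' ⟶ P₀ := hpb0.lift (𝟙 B'') θ (by simp) with hsdef
  have hκ := hpb0.lift_fst (0 : A' ⟶ B'') i' (by simp [wip'])
  have hκ' := hpb0.lift_snd (0 : A' ⟶ B'') i' (by simp [wip'])
  set κ : A' ⟶ P₀ := hpb0.lift (0 : A' ⟶ B'') i' (by simp [wip']) with hκdef
  haveI hMκ : Mono κ := by
    refine Preadditive.mono_of_cancel_zero _ (fun x hx => ?_)
    have : x ≫ i' = 0 := by rw [← hκ', ← Category.assoc, hx, zero_comp]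
    exact zero_of_comp_mono i' this
  have hκπ : κ ≫ π = 0 := hκ
  have ker_π : IsLimit (KernelFork.ofι κ hκπ) := by
    refine KernelFork.IsLimit.ofι' κ hκπ (fun k hk => ?_)
    have hkρ : (k ≫ ρ) ≫ p' = 0 := by
      rw [Category.assoc, ← sqP, ← Category.assoc, hk, zero_comp]
    obtain ⟨k₁, hk₁⟩ := KernelFork.IsLimit.lift' hke2.some (k ≫ ρ) hkρ
    rw [KernelFork.ι_ofι] at hk₁
    refine ⟨k₁, hpb0.hom_ext ?_ ?_⟩
    · rw [Category.assoc, hκ, comp_zero, hk]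
    · rw [Category.assoc, hκ', hk₁]
  obtain ⟨t, htt⟩ := KernelFork.IsLimit.lift' ker_π (𝟙 P₀ - π ≫ s)
    (by rw [Preadditive.sub_comp, Category.id_comp, Category.assoc, hs, Category.comp_id, sub_self])
  rw [KernelFork.ι_ofι] at htt
  have hκt : κ ≫ t = 𝟙 A' := by
    refine (cancel_mono κ).mp ?_
    rw [Category.assoc, htt, Preadditive.comp_sub, Category.comp_id, Category.id_comp,
      ← Category.assoc, hκ, zero_comp, sub_zero]
  have hst : s ≫ t = 0 := by
    refine (cancel_mono κ).mp ?_
    rw [Category.assoc, htt, Preadditive.comp_sub, Category.comp_id, ← Category.assoc, hs,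
      Category.id_comp, sub_self, zero_comp]
  -- the biproduct decomposition of P₀
  haveI hΦ : IsIso (biprod.desc κ s) := by
    refine ⟨⟨biprod.lift t π, ?_, ?_⟩⟩
    · apply biprod.hom_ext' <;> apply biprod.hom_ext <;>
        simp [hκt, hκ, hst, hs]
    · rw [biprod.lift_desc, htt]
      simp
  have hE : biprod.desc κ s ≫ ρ = biprod.desc i' θ := by
    apply biprod.hom_ext' <;> simp [hκ', hs']
  have hdeflE : E.defl (biprod.desc i' θ) := by
    rw [← hE]; exact E.defl_comp _ _ (E.defl_of_isIso _) hρ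
  -- remove the i' component
  have hu2 : ((biprod.fst ≫ (biprod.inl ≫ q) ≫ biprod.inr) ≫
      (biprod.fst ≫ (biprod.inl ≫ q) ≫ biprod.inr) : A' ⊞ B'' ⟶ A' ⊞ B'') = 0 := by simp
  haveI hV : IsIso (𝟙 (A' ⊞ B'') - biprod.fst ≫ (biprod.inl ≫ q) ≫ biprod.inr) :=
    ⟨⟨𝟙 (A' ⊞ B'') + biprod.fst ≫ (biprod.inl ≫ q) ≫ biprod.inr,
      by simp [Preadditive.comp_add, Preadditive.add_comp, Preadditive.comp_sub, Preadditive.sub_comp, hu2],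
      by simp [Preadditive.comp_add, Preadditive.add_comp, Preadditive.comp_sub, Preadditive.sub_comp, hu2]⟩⟩
  have hVE : (𝟙 (A' ⊞ B'') - biprod.fst ≫ (biprod.inl ≫ q) ≫ biprod.inr) ≫
      biprod.desc i' θ = biprod.desc 0 θ := by
    apply biprod.hom_ext' <;> simp [Preadditive.comp_sub, Preadditive.sub_comp, hθ1']
  have hdefl_w1 : E.defl (biprod.desc (0 : A' ⟶ B') θ) := by
    rw [← hVE]; exact E.defl_comp _ _ (E.defl_of_isIso _) hdeflE
  have hw1snd : biprod.desc (0 : A' ⟶ B') θ = biprod.snd ≫ θ := by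
    apply biprod.hom_ext' <;> simp
  have winl : biprod.inl ≫ biprod.desc (0 : A' ⟶ B') θ = 0 := by simp
  -- biprod.inl is a kernel of `biprod.desc 0 θ`
  have ker_w1 : IsLimit (KernelFork.ofι (biprod.inl : A' ⟶ A' ⊞ B'') winl) := by
    refine KernelFork.IsLimit.ofι' _ _ (fun k hk => ⟨k ≫ biprod.fst, ?_⟩)
    have hksnd : k ≫ biprod.snd = 0 := by
      refine zero_of_comp_mono θ ?_
      rw [Category.assoc, ← hw1snd, hk]
    apply biprod.hom_ext
    · simp
    · simp [hksnd]
  -- hence `biprod.desc 0 θ` is a cokernel of biprod.inl, by comparing with its fiber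
  obtain ⟨K, kk, conf_w1⟩ := E.fiber hdefl_w1
  obtain ⟨-, -, wkk, hco_w1, -⟩ := conf_w1
  obtain ⟨u, hu⟩ := KernelFork.IsLimit.lift' ker_w1 kk wkk
  rw [KernelFork.ι_ofι] at hu
  have coker_inl : IsColimit (CokernelCofork.ofπ (biprod.desc (0 : A' ⟶ B') θ) winl) :=
    isCokernelOfComp u kk hco_w1.some winl hu
  haveI : Epi (biprod.desc (0 : A' ⟶ B') θ) := epi_of_coker coker_inl
  -- compare with biprod.snd, which is also a cokernel of biprod.inl
  have hδ := coker_desc_fac coker_inl (biprod.snd : A' ⊞ B'' ⟶ B'') biprod.inl_snd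
  set δ : B' ⟶ B'' := coker_inl.desc (CokernelCofork.ofπ _ biprod.inl_snd) with hδdef
  have hθδ : θ ≫ δ = 𝟙 B'' := by
    have h7 := biprod.inr ≫= hδ
    rw [← Category.assoc, hw1snd, ← Category.assoc] at h7
    simpa using h7
  have hδθ : δ ≫ θ = 𝟙 B' := by
    refine (cancel_epi (biprod.desc (0 : A' ⟶ B') θ)).mp ?_
    rw [← Category.assoc, hδ, ← hw1snd, Category.comp_id]
  haveI : IsIso θ := ⟨⟨δ, hθδ, hδθ⟩⟩
  have hfinal := isPushout_comp_iso hpoAux θ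
  rw [hθ1, hθ2] at hfinal
  exact hfinal

/-- Any pushout square along an inflation extends to a morphism of conflations which is
the identity on the cokernels. -/
lemma conflation_of_isPushout [HasBinaryBiproducts C] {A B A' B' : C}
    {f : A ⟶ A'} {i : A ⟶ B} {i' : A' ⟶ B'} {g : B ⟶ B'}
    (hpo : IsPushout f i i' g) (hi : E.infl i) :
    ∃ (Z : C) (p : B ⟶ Z) (p' : B' ⟶ Z),
      E.IsConflation i p ∧ E.IsConflation i' p' ∧ g ≫ p' = p := by
  obtain ⟨Z, p, conf1⟩ := E.cofiber hi
  obtain ⟨wip, hco1, hke1⟩ := conf1.2.2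
  haveI : Epi p := epi_of_coker hco1.some
  have hp' := hpo.inl_desc (0 : A' ⟶ Z) p (by simp [wip])
  have hp'2 := hpo.inr_desc (0 : A' ⟶ Z) p (by simp [wip])
  set p' : B' ⟶ Z := hpo.desc (0 : A' ⟶ Z) p (by simp [wip]) with hp'def
  have hi'infl : E.infl i' := by
    obtain ⟨Yt, it, gt, hpo2, hit⟩ := E.pushout_infl i f hi
    have he := hpo2.inl_isoIsPushout_hom _ _ hpo
    rw [← he]; exact E.infl_comp _ _ hit (E.infl_of_isIso _)
  haveI : Epi p' := by
    refine Preadditive.epi_of_cancel_zero _ (fun x hx => ?_)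
    have h4 : p ≫ x = 0 := by rw [← hp'2, Category.assoc, hx, comp_zero]
    exact zero_of_epi_comp p h4
  have hcoker : IsColimit (CokernelCofork.ofπ p' hp') := by
    refine CokernelCofork.IsColimit.ofπ' _ _ (fun t ht => ⟨hco1.some.desc
      (CokernelCofork.ofπ (g ≫ t)
        (by rw [← Category.assoc, ← hpo.w, Category.assoc, ht, comp_zero])), ?_⟩)
    refine hpo.hom_ext ?_ ?_
    · rw [← Category.assoc, hp', zero_comp, ht]
    · rw [← Category.assoc, hp'2, coker_desc_fac hco1.some]
  exact ⟨Z, p, p', conf1, E.isConflation_of_coker hi'infl hp' hcoker, hp'2⟩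

/-- An exact functor preserves pushouts along inflations. -/
lemma map_isPushout {D : Type u} [Category.{v} D] [Preadditive D] [HasZeroObject D]
    (ED : ExactStruct D) (G : C ⥤ D)
    (hconf : ∀ {X Y Z : C} (i : X ⟶ Y) (p : Y ⟶ Z),
      E.IsConflation i p → ED.IsConflation (G.map i) (G.map p))
    {A B A' B' : C} {f : A ⟶ A'} {i : A ⟶ B} {i' : A' ⟶ B'} {g : B ⟶ B'}
    (hpo : IsPushout f i i' g) (hi : E.infl i) :
    IsPushout (G.map f) (G.map i) (G.map i') (G.map g) := by
  haveI := E.hasBinaryBiproducts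
  haveI := ED.hasBinaryBiproducts
  obtain ⟨Z, p, p', conf1, conf2, tri⟩ := E.conflation_of_isPushout hpo hi
  exact ED.isPushout_of_conflations (hconf _ _ conf1) (hconf _ _ conf2)
    (by rw [← G.map_comp, ← G.map_comp, hpo.w]) (by rw [← G.map_comp, tri])

end ExactStruct

end Aux2

/-! ### Opposite exact structures and pullback preservation -/

section Op

variable {C : Type u} [Category.{v} C] [Preadditive C] [HasZeroObject C]

/-- The opposite exact structure. -/
def ExactStruct.op (E : ExactStruct C) : ExactStruct Cᵒᵖ where
  infl := fun _ _ f => E.defl f.unop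
  defl := fun _ _ f => E.infl f.unop
  infl_comp f g hf hg := by
    show E.defl (f ≫ g).unop
    rw [unop_comp]; exact E.defl_comp _ _ hg hf
  defl_comp f g hf hg := by
    show E.infl (f ≫ g).unop
    rw [unop_comp]; exact E.infl_comp _ _ hg hf
  infl_from_zero f hO := E.defl_to_zero f.unop hO.unop
  defl_to_zero f hO := E.infl_from_zero f.unop hO.unop
  pushout_infl i f hi := by
    obtain ⟨Y', p', g', hpb, hp'⟩ := E.pullback_defl i.unop f.unop hi
    exact ⟨Opposite.op Y', p'.op, g'.op, by simpa using hpb.op, by simpa using hp'⟩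
  pullback_defl p f hp := by
    obtain ⟨Y', i₀, g₀, hpo, hi₀⟩ := E.pushout_infl p.unop f.unop hp
    exact ⟨Opposite.op Y', i₀.op, g₀.op, by simpa using hpo.op, by simpa using hi₀⟩
  bicartesian a b c d := by
    constructor
    · rintro ⟨hpb, hc, hd⟩
      obtain ⟨hpb', hinfl', hdefl'⟩ :=
        (E.bicartesian c.unop d.unop a.unop b.unop).mpr ⟨hpb.unop.flip, hd, hc⟩
      exact ⟨by simpa using hpb'.op.flip, hdefl', hinfl'⟩
    · rintro ⟨hpo, hb, ha⟩
      obtain ⟨hpo', hinfl', hdefl'⟩ :=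
        (E.bicartesian c.unop d.unop a.unop b.unop).mp ⟨hpo.unop.flip, ha, hb⟩
      exact ⟨by simpa using hpo'.op.flip, hdefl', hinfl'⟩

/-- Conflations pass to the opposite structure. -/
lemma ExactStruct.IsConflation.op' {E : ExactStruct C} {X Y Z : C} {i : X ⟶ Y} {p : Y ⟶ Z}
    (h : E.IsConflation i p) : E.op.IsConflation p.op i.op := by
  obtain ⟨hi, hp, w, hco, hke⟩ := h
  refine ⟨hp, hi, by rw [← op_comp, w]; simp, ?_, ?_⟩
  · exact ⟨KernelFork.IsLimit.ofιOp i w hke.some⟩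
  · exact ⟨CokernelCofork.IsColimit.ofπOp p w hco.some⟩

/-- Conflations in the opposite structure come from conflations. -/
lemma ExactStruct.IsConflation.unop' {E : ExactStruct C} {X Y Z : Cᵒᵖ} {i : X ⟶ Y} {p : Y ⟶ Z}
    (h : E.op.IsConflation i p) : E.IsConflation p.unop i.unop := by
  obtain ⟨hi, hp, w, hco, hke⟩ := h
  refine ⟨hp, hi, by rw [← unop_comp, w]; simp, ?_, ?_⟩
  · exact ⟨KernelFork.IsLimit.ofιUnop i w hke.some⟩
  · exact ⟨CokernelCofork.IsColimit.ofπUnop p w hco.some⟩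

/-- An exact functor preserves pullbacks along deflations. -/
lemma ExactStruct.map_isPullback {D : Type u} [Category.{v} D] [Preadditive D]
    [HasZeroObject D] (E : ExactStruct C) (ED : ExactStruct D) (G : C ⥤ D)
    (hconf : ∀ {X Y Z : C} (i : X ⟶ Y) (p : Y ⟶ Z),
      E.IsConflation i p → ED.IsConflation (G.map i) (G.map p))
    {A B A' B' : C} {a : A ⟶ B} {b : A ⟶ A'} {c : B ⟶ B'} {d : A' ⟶ B'}
    (hpb : IsPullback a b c d) (hd : E.defl d) :
    IsPullback (G.map a) (G.map b) (G.map c) (G.map d) := by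
  have hconf' : ∀ {X Y Z : Cᵒᵖ} (i : X ⟶ Y) (p : Y ⟶ Z),
      E.op.IsConflation i p → ED.op.IsConflation (G.op.map i) (G.op.map p) := by
    intro X Y Z i p h
    exact (hconf p.unop i.unop h.unop').op'
  have key := E.op.map_isPushout ED.op G.op hconf' hpb.op.flip
    (show E.op.infl d.op from hd)
  have h2 := key.unop.flip
  simpa using h2

end Op

/-- the pullback of a sub-exact structure along an exact functor is an
exact structure, sub-exact in the given one, and the functor is exact for the
pulled-back structures. -/
theorem pullback_subexact_structure
    {C D : Type u} [Category.{v} C] [Preadditive C] [HasZeroObject C]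
    [Category.{v} D] [Preadditive D] [HasZeroObject D]
    (EC : ExactStruct C) (ED ED' : ExactStruct D)
    (hsub : ED'.Sub ED)
    (G : C ⥤ D) (hG : IsExactFunctor G EC ED) :
    ∃ EC' : ExactStruct C,
      (EC'.infl = fun X Y f => EC.infl f ∧ ED'.infl (G.map f)) ∧
      (EC'.defl = fun X Y f => EC.defl f ∧ ED'.defl (G.map f)) ∧
      EC'.Sub EC ∧
      IsExactFunctor G EC' ED' := by
  obtain ⟨hz, hinfl, hdefl, hconf⟩ := hG
  refine ⟨{
    infl := fun X Y f => EC.infl f ∧ ED'.infl (G.map f)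
    defl := fun X Y f => EC.defl f ∧ ED'.defl (G.map f)
    infl_comp := fun f g hf hg => ⟨EC.infl_comp f g hf.1 hg.1,
      by rw [G.map_comp]; exact ED'.infl_comp _ _ hf.2 hg.2⟩
    defl_comp := fun f g hf hg => ⟨EC.defl_comp f g hf.1 hg.1,
      by rw [G.map_comp]; exact ED'.defl_comp _ _ hf.2 hg.2⟩
    infl_from_zero := fun f hO => ⟨EC.infl_from_zero f hO,
      ED'.infl_from_zero _ (hz _ hO)⟩
    defl_to_zero := fun f hO => ⟨EC.defl_to_zero f hO,
      ED'.defl_to_zero _ (hz _ hO)⟩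
    pushout_infl := ?_
    pullback_defl := ?_
    bicartesian := ?_ }, rfl, rfl, ⟨fun f hf => hf.1, fun f hf => hf.1⟩,
    hz, fun f hf => hf.2, fun f hf => hf.2,
    fun i p hc => ⟨hc.1.2, hc.2.1.2, (hconf i p ⟨hc.1.1, hc.2.1.1, hc.2.2⟩).2.2⟩⟩
  · -- pushout_infl
    intro X Y X' i f hi
    obtain ⟨Y', i₀, g₀, hpo, hinfl₀⟩ := EC.pushout_infl i f hi.1
    have hDpo := EC.map_isPushout ED G hconf hpo hi.1
    obtain ⟨Q, j, h, hpo', hj⟩ := ED'.pushout_infl (G.map i) (G.map f) hi.2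
    have he := hpo'.inl_isoIsPushout_hom _ _ hDpo
    refine ⟨Y', i₀, g₀, hpo, hinfl₀, ?_⟩
    rw [← he]
    exact ED'.infl_comp _ _ hj (ED'.infl_of_isIso _)
  · -- pullback_defl
    intro Y Z Z' p f hp
    obtain ⟨Y', p₀, g₀, hpb, hdefl₀⟩ := EC.pullback_defl p f hp.1
    have hDpb := (EC.map_isPullback ED G hconf hpb.flip hp.1).flip
    obtain ⟨Q, p₁, g₁, hpb', hp₁⟩ := ED'.pullback_defl (G.map p) (G.map f) hp.2
    have he := hpb'.isoIsPullback_inv_snd _ _ hDpb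
    refine ⟨Y', p₀, g₀, hpb, hdefl₀, ?_⟩
    rw [← he]
    exact ED'.defl_comp _ _ (ED'.defl_of_isIso _) hp₁
  · -- bicartesian
    intro W X' Y' Z' a b c d
    constructor
    · rintro ⟨hpb, hc, hd⟩
      obtain ⟨hpoC, hbC, haC⟩ := (EC.bicartesian a b c d).mp ⟨hpb, hc.1, hd.1⟩
      have hDpb := EC.map_isPullback ED G hconf hpb hd.1
      obtain ⟨-, hbD, haD⟩ := (ED'.bicartesian (G.map a) (G.map b) (G.map c)
        (G.map d)).mp ⟨hDpb, hc.2, hd.2⟩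
      exact ⟨hpoC, ⟨hbC, hbD⟩, ⟨haC, haD⟩⟩
    · rintro ⟨hpo, hb, ha⟩
      obtain ⟨hpbC, hcC, hdC⟩ := (EC.bicartesian a b c d).mpr ⟨hpo, hb.1, ha.1⟩
      have hDpo := EC.map_isPushout ED G hconf hpo hb.1
      obtain ⟨-, hcD, hdD⟩ := (ED'.bicartesian (G.map a) (G.map b) (G.map c)
        (G.map d)).mpr ⟨hDpo, hb.2, ha.2⟩
      exact ⟨hpbC, ⟨hcC, hcD⟩, ⟨hdC, hdD⟩⟩

end Stmt5
end

section
/- Let G : C → D be a triangulated functor between triangulated categories admitting a left adjoint F and a right adjoint H, and suppose G is spherical, i.e. the twist cof(id_C → HG) and cotwist fib(FG → id_D) are autoequivalences (so that H ≃ F ∘ T_D for the cotwist T_D). Equip C with the exact/extriangulated structure whose conflations are the distinguished triangles X → Z → Y → X[1] whose image under G splits. Then: (1) every object of the form F(d) is injective and every object H(d) is projective for this structure; (2) C has enough projectives and enough injectives; (3) the classes of projectives and injectives both coincide with the additive closure of the essential image of H (equivalently of F); hence the structure is Frobenius. -/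
/-!
STATEMENT 6: Let G : C → D be a triangulated functor with left adjoint F and right
adjoint H, and suppose G is spherical: the twist T_C = cof(id_C → HG) and the cotwist
T_D = fib(FG → id_D) are autoequivalences.  Equip C with the extriangulated structure
whose conflations are the distinguished triangles X → Z → Y → X[1] whose image under G
splits; its extension groups are E(X,Y) = {α : X ⟶ Y[1] | G(α) = 0}.  Then:
(1) every F(d) is injective and every H(d) is projective;
(2) C has enough projectives and enough injectives;
(3) projectives = injectives = additive closure (retracts) of the essential image of H,
    equivalently of F; hence the structure is Frobenius.
-/

open CategoryTheory Limits Pretriangulated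

set_option linter.unusedSectionVars false
set_option maxHeartbeats 1000000

namespace Stmt6

universe v u

variable {C D : Type u} [Category.{v} C] [Category.{v} D]
  [HasZeroObject C] [Preadditive C] [HasShift C ℤ]
  [∀ n : ℤ, (shiftFunctor C n).Additive] [Pretriangulated C]
  [HasZeroObject D] [Preadditive D] [HasShift D ℤ]
  [∀ n : ℤ, (shiftFunctor D n).Additive] [Pretriangulated D]

section Defs

variable (G : C ⥤ D)

/-- `I` is injective for the extriangulated structure on `C` pulled back along `G`
from the split structure: every `G`-split extension of any `X` by `I` vanishes. -/
def IsInj (I : C) : Prop :=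
  ∀ (X : C) (α : X ⟶ I⟦(1:ℤ)⟧), G.map α = 0 → α = 0

/-- `P` is projective for the pulled-back extriangulated structure. -/
def IsProj (P : C) : Prop :=
  ∀ (Y : C) (α : P ⟶ Y⟦(1:ℤ)⟧), G.map α = 0 → α = 0

/-- `X` is a conflation-quotient of a projective: there is a `G`-split
distinguished triangle `Z → P → X → Z[1]` with `P` projective. -/
def HasProjResolution (X : C) : Prop :=
  ∃ (Z P : C) (f : Z ⟶ P) (g : P ⟶ X) (α : X ⟶ Z⟦(1:ℤ)⟧),
    (Triangle.mk f g α ∈ distTriang C) ∧ G.map α = 0 ∧ IsProj G P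

/-- `X` embeds by a conflation into an injective: there is a `G`-split distinguished
triangle `X → I → Z → X[1]` with `I` injective. -/
def HasInjResolution (X : C) : Prop :=
  ∃ (I Z : C) (f : X ⟶ I) (g : I ⟶ Z) (α : Z ⟶ X⟦(1:ℤ)⟧),
    (Triangle.mk f g α ∈ distTriang C) ∧ G.map α = 0 ∧ IsInj G I

/-- `X` lies in the additive closure of the essential image of a functor `Φ`:
it is a retract (direct summand) of an object in the image. -/
def InAddImage {E : Type u} [Category.{v} E] (Φ : E ⥤ C) (X : C) : Prop :=
  ∃ (e : E) (s : X ⟶ Φ.obj e) (r : Φ.obj e ⟶ X), s ≫ r = 𝟙 X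

end Defs


section Tri

variable {C' : Type u} [Category.{v} C'] [HasZeroObject C'] [Preadditive C'] [HasShift C' ℤ]
  [∀ n : ℤ, (shiftFunctor C' n).Additive] [Pretriangulated C']

lemma sec_of_mor₃_zero (T : Triangle C') (hT : T ∈ distTriang C') (h : T.mor₃ = 0) :
    ∃ s : T.obj₃ ⟶ T.obj₂, s ≫ T.mor₂ = 𝟙 T.obj₃ := by
  obtain ⟨g, hg⟩ := Triangle.coyoneda_exact₃ T hT (𝟙 T.obj₃) (by rw [Category.id_comp, h])
  exact ⟨g, hg.symm⟩

lemma retr_of_mor₃_zero (T : Triangle C') (hT : T ∈ distTriang C') (h : T.mor₃ = 0) :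
    ∃ ρ : T.obj₂ ⟶ T.obj₁, T.mor₁ ≫ ρ = 𝟙 T.obj₁ := by
  have h1 : T.invRotate.mor₁ = 0 := by
    change -(T.mor₃⟦(-1:ℤ)⟧') ≫ _ = 0
    rw [h]
    simp
  obtain ⟨g, hg⟩ := Triangle.yoneda_exact₂ T.invRotate (inv_rot_of_distTriang T hT)
    (𝟙 T.obj₁) (by rw [h1]; exact zero_comp)
  exact ⟨g, hg.symm⟩

lemma mor₃_zero_of_sec (T : Triangle C') (hT : T ∈ distTriang C')
    (s : T.obj₃ ⟶ T.obj₂) (hs : s ≫ T.mor₂ = 𝟙 T.obj₃) : T.mor₃ = 0 := by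
  calc T.mor₃ = (s ≫ T.mor₂) ≫ T.mor₃ := by rw [hs, Category.id_comp]
    _ = s ≫ (T.mor₂ ≫ T.mor₃) := by rw [Category.assoc]
    _ = 0 := by rw [comp_distTriang_mor_zero₂₃ T hT, comp_zero]

lemma mor₃_zero_of_retr (T : Triangle C') (hT : T ∈ distTriang C')
    (ρ : T.obj₂ ⟶ T.obj₁) (hρ : T.mor₁ ≫ ρ = 𝟙 T.obj₁) : T.mor₃ = 0 := by
  calc T.mor₃ = T.mor₃ ≫ (𝟙 T.obj₁)⟦(1:ℤ)⟧' := by rw [CategoryTheory.Functor.map_id, Category.comp_id]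
    _ = T.mor₃ ≫ (T.mor₁ ≫ ρ)⟦(1:ℤ)⟧' := by rw [hρ]
    _ = (T.mor₃ ≫ T.mor₁⟦(1:ℤ)⟧') ≫ ρ⟦(1:ℤ)⟧' := by rw [CategoryTheory.Functor.map_comp, Category.assoc]
    _ = 0 := by rw [comp_distTriang_mor_zero₃₁ T hT, zero_comp]

end Tri

lemma bip {E : Type*} [Category E] [Preadditive E]
    {A A' B Cb : E} (u : A ⟶ B) (ρ : B ⟶ A) (pp : B ⟶ Cb) (s : Cb ⟶ B)
    (j : A' ⟶ B) (t : B ⟶ A')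
    (huρ : u ≫ ρ = 𝟙 A) (hsp : s ≫ pp = 𝟙 Cb) (hjt : j ≫ t = 𝟙 A')
    (hjρ : j ≫ ρ = 0) (hup : u ≫ pp = 0)
    (htj : t ≫ j = 𝟙 B - ρ ≫ u)
    (H1 : ∀ (x : B ⟶ B), x ≫ pp = 0 → ∃ y : B ⟶ A, x = y ≫ u) :
    (j ≫ pp) ≫ (s ≫ (𝟙 B - ρ ≫ u) ≫ t) = 𝟙 A' ∧
      (s ≫ (𝟙 B - ρ ≫ u) ≫ t) ≫ (j ≫ pp) = 𝟙 Cb := by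
  have hx : ((𝟙 B - pp ≫ s) ≫ (𝟙 B - ρ ≫ u)) ≫ pp = 0 := by
    simp only [Preadditive.sub_comp, Preadditive.comp_sub, Category.id_comp, Category.assoc, hup, comp_zero, sub_zero, hsp, Category.comp_id]
    simp
  obtain ⟨y, hy⟩ := H1 _ hx
  have hy0 : y = 0 := by
    have h1 : y = ((𝟙 B - pp ≫ s) ≫ (𝟙 B - ρ ≫ u)) ≫ ρ := by
      rw [hy, Category.assoc, huρ, Category.comp_id]
    rw [h1]
    simp only [Preadditive.sub_comp, Preadditive.comp_sub, Category.id_comp, Category.assoc, huρ, Category.comp_id]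
    simp
  have star1 : pp ≫ s ≫ (𝟙 B - ρ ≫ u) = 𝟙 B - ρ ≫ u := by
    have h2 : (𝟙 B - pp ≫ s) ≫ (𝟙 B - ρ ≫ u) = 0 := by rw [hy, hy0, zero_comp]
    have h3 : (𝟙 B - ρ ≫ u) - pp ≫ s ≫ (𝟙 B - ρ ≫ u) = 0 := by
      rw [← h2]
      simp only [Preadditive.sub_comp, Category.id_comp, Category.assoc]
    have h4 := sub_eq_zero.mp h3
    exact h4.symm
  constructor
  · calc (j ≫ pp) ≫ s ≫ (𝟙 B - ρ ≫ u) ≫ t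
        = j ≫ (pp ≫ s ≫ (𝟙 B - ρ ≫ u)) ≫ t := by simp only [Category.assoc]
      _ = j ≫ (𝟙 B - ρ ≫ u) ≫ t := by rw [star1]
      _ = j ≫ t - j ≫ ρ ≫ u ≫ t := by
          simp only [Preadditive.comp_sub, Preadditive.sub_comp, Category.comp_id,
            Category.id_comp, Category.assoc]
      _ = j ≫ t := by rw [← Category.assoc, hjρ, zero_comp, sub_zero]
      _ = 𝟙 A' := hjt
  · have hιι : (𝟙 B - ρ ≫ u) ≫ (𝟙 B - ρ ≫ u) = 𝟙 B - ρ ≫ u := by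
      simp only [Preadditive.sub_comp, Preadditive.comp_sub, Category.id_comp,
        Category.comp_id, Category.assoc, reassoc_of% huρ]
      abel
    calc (s ≫ (𝟙 B - ρ ≫ u) ≫ t) ≫ j ≫ pp
        = s ≫ (𝟙 B - ρ ≫ u) ≫ (t ≫ j) ≫ pp := by simp only [Category.assoc]
      _ = s ≫ (𝟙 B - ρ ≫ u) ≫ (𝟙 B - ρ ≫ u) ≫ pp := by rw [htj]
      _ = s ≫ (𝟙 B - ρ ≫ u) ≫ pp := by rw [reassoc_of% hιι]
      _ = s ≫ pp - s ≫ ρ ≫ u ≫ pp := by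
          simp only [Preadditive.comp_sub, Preadditive.sub_comp, Category.id_comp,
            Category.comp_id, Category.assoc]
      _ = 𝟙 Cb := by rw [hup, hsp]; simp


section Adj

variable (G : C ⥤ D) [G.CommShift ℤ] [G.IsTriangulated]
variable (F : D ⥤ C) (H : D ⥤ C)

lemma H_map_sub (adjGH : G ⊣ H) {X Y : D} (x y : X ⟶ Y) :
    H.map (x - y) = H.map x - H.map y := by
  apply (adjGH.homEquiv (H.obj X) Y).symm.injective
  rw [Adjunction.homEquiv_counit, Adjunction.homEquiv_counit]
  have n1 := adjGH.counit.naturality (x - y)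
  have n2 := adjGH.counit.naturality x
  have n3 := adjGH.counit.naturality y
  simp only [Functor.comp_map, Functor.id_map] at n1 n2 n3
  rw [G.map_sub, Preadditive.sub_comp, n1, n2, n3]
  simp [Preadditive.comp_sub]

lemma H_map_zero (adjGH : G ⊣ H) (X Y : D) : H.map (0 : X ⟶ Y) = 0 := by
  have h := H_map_sub G H adjGH (0 : X ⟶ Y) (0 : X ⟶ Y)
  simpa using h

lemma F_map_zero (adjFG : F ⊣ G) (X Y : D) : F.map (0 : X ⟶ Y) = 0 := by
  apply (adjFG.homEquiv X (F.obj Y)).injective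
  rw [Adjunction.homEquiv_unit, Adjunction.homEquiv_unit]
  have n1 := adjFG.unit.naturality (0 : X ⟶ Y)
  simp only [Functor.comp_map, Functor.id_map] at n1
  rw [← n1]
  simp

lemma G_shift_zero {X Y : C} (f : X ⟶ Y) (n : ℤ) (h : G.map f = 0) :
    G.map ((shiftFunctor C n).map f) = 0 := by
  have h2 := G.commShiftIso_hom_naturality f n
  rw [h, CategoryTheory.Functor.map_zero, comp_zero] at h2
  rw [← cancel_mono ((G.commShiftIso n).hom.app Y)]
  simpa using h2

lemma isProj_F (adjFG : F ⊣ G) (d : D) : IsProj G (F.obj d) := by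
  intro Y α hα
  have h1 : adjFG.counit.app (F.obj d) ≫ α = 0 := by
    have h := adjFG.counit.naturality α
    simp only [Functor.id_map] at h
    rw [← h]
    have h2 : (G ⋙ F).map α = 0 := by
      have h3 : (G ⋙ F).map α = F.map (G.map α) := rfl
      rw [h3, hα, F_map_zero G F adjFG]
    rw [h2, zero_comp]
  calc α = 𝟙 (F.obj d) ≫ α := by rw [Category.id_comp]
    _ = (F.map (adjFG.unit.app d) ≫ adjFG.counit.app (F.obj d)) ≫ α := by
        simp
    _ = F.map (adjFG.unit.app d) ≫ (adjFG.counit.app (F.obj d) ≫ α) := by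
        rw [Category.assoc]
    _ = 0 := by rw [h1, comp_zero]

lemma isInj_H (adjGH : G ⊣ H) (d : D) : IsInj G (H.obj d) := by
  intro X α hα
  set η := shiftFunctorCompIsoId C (1:ℤ) (-1:ℤ) (by omega) with hηdef
  set β : X⟦(-1:ℤ)⟧ ⟶ H.obj d :=
    (shiftFunctor C (-1:ℤ)).map α ≫ η.hom.app (H.obj d) with hβdef
  have hGβ : G.map β = 0 := by
    rw [hβdef, G.map_comp, G_shift_zero G α (-1) hα, zero_comp]
  have h1 : β ≫ adjGH.unit.app (H.obj d) = 0 := by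
    have h := adjGH.unit.naturality β
    simp only [Functor.id_map] at h
    rw [h]
    have h2 : (G ⋙ H).map β = 0 := by
      have h3 : (G ⋙ H).map β = H.map (G.map β) := rfl
      rw [h3, hGβ, H_map_zero G H adjGH]
    rw [h2, comp_zero]
  have hβ0 : β = 0 := by
    calc β = β ≫ 𝟙 (H.obj d) := by rw [Category.comp_id]
      _ = β ≫ (adjGH.unit.app (H.obj d) ≫ H.map (adjGH.counit.app d)) := by
          erw [adjGH.right_triangle_components]
      _ = (β ≫ adjGH.unit.app (H.obj d)) ≫ H.map (adjGH.counit.app d) := by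
          rw [← Category.assoc]
      _ = 0 := by rw [h1, zero_comp]
  apply (shiftFunctor C (-1:ℤ)).map_injective
  rw [CategoryTheory.Functor.map_zero]
  have h4 : (shiftFunctor C (-1:ℤ)).map α = β ≫ η.inv.app (H.obj d) := by
    rw [hβdef, Category.assoc, Iso.hom_inv_id_app]
    exact (Category.comp_id _).symm
  rw [h4, hβ0, zero_comp]

lemma isProj_of_retract {P X : C} (hP : IsProj G P) (s : X ⟶ P) (rr : P ⟶ X)
    (hsr : s ≫ rr = 𝟙 X) : IsProj G X := by
  intro Y α hα
  have h : rr ≫ α = 0 := hP Y (rr ≫ α) (by rw [G.map_comp, hα, comp_zero])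
  calc α = (s ≫ rr) ≫ α := by rw [hsr, Category.id_comp]
    _ = s ≫ (rr ≫ α) := by rw [Category.assoc]
    _ = 0 := by rw [h, comp_zero]

lemma isInj_of_retract {I X : C} (hI : IsInj G I) (s : X ⟶ I) (rr : I ⟶ X)
    (hsr : s ≫ rr = 𝟙 X) : IsInj G X := by
  intro W α hα
  have h : α ≫ s⟦(1:ℤ)⟧' = 0 := hI W (α ≫ s⟦(1:ℤ)⟧')
    (by rw [G.map_comp, hα, zero_comp])
  calc α = α ≫ (𝟙 X)⟦(1:ℤ)⟧' := by rw [CategoryTheory.Functor.map_id, Category.comp_id]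
    _ = α ≫ (s ≫ rr)⟦(1:ℤ)⟧' := by rw [hsr]
    _ = (α ≫ s⟦(1:ℤ)⟧') ≫ rr⟦(1:ℤ)⟧' := by
        rw [CategoryTheory.Functor.map_comp, Category.assoc]
    _ = 0 := by rw [h, zero_comp]

lemma postcomp_unit_shift_zero (adjGH : G ⊣ H) {X Y : C}
    (α : X ⟶ Y⟦(1:ℤ)⟧) (hα : G.map α = 0) :
    α ≫ (adjGH.unit.app Y)⟦(1:ℤ)⟧' = 0 := by
  set η := shiftFunctorCompIsoId C (1:ℤ) (-1:ℤ) (by omega) with hηdef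
  set β : X⟦(-1:ℤ)⟧ ⟶ Y := (shiftFunctor C (-1:ℤ)).map α ≫ η.hom.app Y with hβdef
  have hGβ : G.map β = 0 := by
    rw [hβdef, G.map_comp, G_shift_zero G α (-1) hα, zero_comp]
  have h1 : β ≫ adjGH.unit.app Y = 0 := by
    have h := adjGH.unit.naturality β
    simp only [Functor.id_map] at h
    rw [h]
    have h2 : (G ⋙ H).map β = 0 := by
      have h3 : (G ⋙ H).map β = H.map (G.map β) := rfl
      rw [h3, hGβ, H_map_zero G H adjGH]
    rw [h2, comp_zero]
  apply (shiftFunctor C (-1:ℤ)).map_injective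
  rw [CategoryTheory.Functor.map_comp, CategoryTheory.Functor.map_zero]
  have h2 := η.hom.naturality (adjGH.unit.app Y)
  have h3 : (shiftFunctor C (-1:ℤ)).map ((adjGH.unit.app Y)⟦(1:ℤ)⟧')
      = η.hom.app Y ≫ adjGH.unit.app Y ≫ η.inv.app ((G ⋙ H).obj Y) := by
    rw [← cancel_mono (η.hom.app ((G ⋙ H).obj Y))]
    simpa using h2
  rw [h3, ← Category.assoc, ← hβdef]
  rw [← Category.assoc, h1, zero_comp]

end Adj


section Twist

variable (G : C ⥤ D) [G.CommShift ℤ] [G.IsTriangulated]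
variable (F : D ⥤ C) (H : D ⥤ C) (adjFG : F ⊣ G) (adjGH : G ⊣ H)
variable (T_C : C ⥤ C) (p : (G ⋙ H) ⟶ T_C) (q : ∀ c : C, T_C.obj c ⟶ c⟦(1:ℤ)⟧)
variable (T_D : D ⥤ D) (m : T_D ⟶ (H ⋙ G)) (r : ∀ d : D, d ⟶ (T_D.obj d)⟦(1:ℤ)⟧)

lemma q_G_zero
    (twist_tri : ∀ c : C, Triangle.mk (adjGH.unit.app c) (p.app c) (q c) ∈ distTriang C)
    (c : C) : G.map (q c) = 0 := by
  have h31 := comp_distTriang_mor_zero₃₁ _ (twist_tri c)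
  simp only [Triangle.mk_mor₁, Triangle.mk_mor₃] at h31
  have h2 : G.map (q c) ≫ G.map ((adjGH.unit.app c)⟦(1:ℤ)⟧') = 0 := by
    rw [← G.map_comp, show q c ≫ (adjGH.unit.app c)⟦(1:ℤ)⟧' = 0 from h31, G.map_zero]
  have h3 := G.commShiftIso_hom_naturality (adjGH.unit.app c) (1:ℤ)
  simp only [Functor.id_obj, Functor.comp_obj] at h3
  have h4 : G.map (q c) ≫ (G.commShiftIso (1:ℤ)).hom.app c ≫
      (G.map (adjGH.unit.app c))⟦(1:ℤ)⟧' = 0 := by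
    rw [← h3, ← Category.assoc, h2, zero_comp]
  have h5 : (G.map (adjGH.unit.app c))⟦(1:ℤ)⟧' ≫
      (adjGH.counit.app (G.obj c))⟦(1:ℤ)⟧' = 𝟙 ((G.obj c)⟦(1:ℤ)⟧) := by
    rw [← CategoryTheory.Functor.map_comp]; erw [adjGH.left_triangle_components]
    exact (shiftFunctor D (1:ℤ)).map_id (G.obj c)
  have h4' : (G.map (q c) ≫ (G.commShiftIso (1:ℤ)).hom.app c) ≫
      (G.map (adjGH.unit.app c))⟦(1:ℤ)⟧' = 0 := by
    rw [Category.assoc]; exact h4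
  have h6 : G.map (q c) ≫ (G.commShiftIso (1:ℤ)).hom.app c = 0 := by
    have h7 : (G.map (q c) ≫ (G.commShiftIso (1:ℤ)).hom.app c) ≫
        ((G.map (adjGH.unit.app c))⟦(1:ℤ)⟧' ≫ (adjGH.counit.app (G.obj c))⟦(1:ℤ)⟧') = 0 := by
      rw [← Category.assoc, h4', zero_comp]
    rw [h5] at h7
    simpa using h7
  have h8 := congrArg (fun z => z ≫ (G.commShiftIso (1:ℤ)).inv.app c) h6
  simpa using h8

lemma r_Gc_zero
    (cotwist_tri : ∀ d : D, Triangle.mk (m.app d) (adjGH.counit.app d) (r d) ∈ distTriang D)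
    (c : C) : r (G.obj c) = 0 := by
  have h := mor₃_zero_of_sec _ (cotwist_tri (G.obj c)) (G.map (adjGH.unit.app c)) ?_
  · exact h
  · exact adjGH.left_triangle_components c

lemma kappa
    (twist_tri : ∀ c : C, Triangle.mk (adjGH.unit.app c) (p.app c) (q c) ∈ distTriang C)
    (cotwist_tri : ∀ d : D, Triangle.mk (m.app d) (adjGH.counit.app d) (r d) ∈ distTriang D)
    (c : C) :
    ∃ ν : G.obj (T_C.obj c) ⟶ T_D.obj (G.obj c),
      (m.app (G.obj c) ≫ G.map (p.app c)) ≫ ν = 𝟙 (T_D.obj (G.obj c)) ∧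
      ν ≫ (m.app (G.obj c) ≫ G.map (p.app c)) = 𝟙 (G.obj (T_C.obj c)) := by
  set u' : G.obj c ⟶ G.obj (H.obj (G.obj c)) := G.map (adjGH.unit.app c) with hu'def
  set ρ' : G.obj (H.obj (G.obj c)) ⟶ G.obj c := adjGH.counit.app (G.obj c) with hρ'def
  set pp' : G.obj (H.obj (G.obj c)) ⟶ G.obj (T_C.obj c) := G.map (p.app c) with hpp'def
  set j' : T_D.obj (G.obj c) ⟶ G.obj (H.obj (G.obj c)) := m.app (G.obj c) with hj'def
  have hGT1 : G.mapTriangle.obj (Triangle.mk (adjGH.unit.app c) (p.app c) (q c))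
      ∈ distTriang D := G.map_distinguished _ (twist_tri c)
  have hm3 : (G.mapTriangle.obj (Triangle.mk (adjGH.unit.app c) (p.app c) (q c))).mor₃ = 0 := by
    change G.map (q c) ≫ (G.commShiftIso (1:ℤ)).hom.app c = 0
    rw [q_G_zero G H adjGH T_C p q twist_tri c, zero_comp]
  obtain ⟨s₀, hs₀⟩ := sec_of_mor₃_zero _ hGT1 hm3
  set s : G.obj (T_C.obj c) ⟶ G.obj (H.obj (G.obj c)) := s₀ with hsdef
  have hs : s ≫ pp' = 𝟙 (G.obj (T_C.obj c)) := hs₀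
  have hr0 : (Triangle.mk (m.app (G.obj c)) (adjGH.counit.app (G.obj c))
      (r (G.obj c))).mor₃ = 0 := by
    exact r_Gc_zero G H adjGH T_D m r cotwist_tri c
  obtain ⟨τ₀, hτ₀⟩ := retr_of_mor₃_zero _ (cotwist_tri (G.obj c)) hr0
  set τ : G.obj (H.obj (G.obj c)) ⟶ T_D.obj (G.obj c) := τ₀ with hτdef
  have hτ : j' ≫ τ = 𝟙 (T_D.obj (G.obj c)) := hτ₀
  have huρ : u' ≫ ρ' = 𝟙 (G.obj c) := adjGH.left_triangle_components c
  have hjρ : j' ≫ ρ' = 0 := by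
    exact comp_distTriang_mor_zero₁₂ _ (cotwist_tri (G.obj c))
  have hup : u' ≫ pp' = 0 := by
    have h12 : adjGH.unit.app c ≫ p.app c = 0 := by
      exact comp_distTriang_mor_zero₁₂ _ (twist_tri c)
    rw [hu'def, hpp'def, ← G.map_comp, h12, G.map_zero]
  set ι : G.obj (H.obj (G.obj c)) ⟶ G.obj (H.obj (G.obj c)) :=
    𝟙 (G.obj (H.obj (G.obj c))) - ρ' ≫ u' with hιdef
  have e1 : j' ≫ ι = j' := by
    rw [hιdef]
    simp only [Preadditive.comp_sub, Category.comp_id]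
    rw [← Category.assoc, hjρ, zero_comp, sub_zero]
  have e2 : u' ≫ ι = 0 := by
    rw [hιdef]
    simp only [Preadditive.comp_sub, Category.comp_id]
    rw [← Category.assoc, huρ, Category.id_comp, sub_self]
  have hjt : j' ≫ (ι ≫ τ) = 𝟙 (T_D.obj (G.obj c)) := by
    rw [← Category.assoc, e1, hτ]
  have htj : (ι ≫ τ) ≫ j' = ι := by
    have hjx : j' ≫ (ι ≫ (𝟙 (G.obj (H.obj (G.obj c))) - τ ≫ j')) = 0 := by
      rw [← Category.assoc, e1]
      simp only [Preadditive.comp_sub, Category.comp_id]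
      rw [← Category.assoc, hτ, Category.id_comp, sub_self]
    obtain ⟨v, hv⟩ : ∃ v : G.obj c ⟶ G.obj (H.obj (G.obj c)),
        ι ≫ (𝟙 (G.obj (H.obj (G.obj c))) - τ ≫ j') = ρ' ≫ v := Triangle.yoneda_exact₂ _ (cotwist_tri (G.obj c))
      (ι ≫ (𝟙 (G.obj (H.obj (G.obj c))) - τ ≫ j')) (by exact hjx)
    have hv' : ι ≫ (𝟙 (G.obj (H.obj (G.obj c))) - τ ≫ j') = ρ' ≫ v := hv
    have hv0 : v = 0 := by
      have h1 : v = u' ≫ ρ' ≫ v := by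
        rw [← Category.assoc, huρ, Category.id_comp]
      rw [h1, ← hv', ← Category.assoc, e2, zero_comp]
    have h2 : ι ≫ (𝟙 (G.obj (H.obj (G.obj c))) - τ ≫ j') = 0 := by
      rw [hv', hv0, comp_zero]
    have h3 : ι - ι ≫ τ ≫ j' = 0 := by
      rw [← h2]
      simp only [Preadditive.comp_sub, Category.comp_id]
    have h4 := sub_eq_zero.mp h3
    rw [← Category.assoc] at h4
    exact h4.symm
  have H1 : ∀ (x : G.obj (H.obj (G.obj c)) ⟶ G.obj (H.obj (G.obj c))),
      x ≫ pp' = 0 →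
      ∃ y : G.obj (H.obj (G.obj c)) ⟶ G.obj c, x = y ≫ u' := by
    intro x hx
    obtain ⟨y, hy⟩ := Triangle.coyoneda_exact₂ _ hGT1 x (by exact hx)
    exact ⟨y, hy⟩
  obtain ⟨h1, h2⟩ := bip u' ρ' pp' s j' (ι ≫ τ) huρ hs hjt hjρ hup htj H1
  exact ⟨_, h1, h2⟩


lemma lambda
    (adjFG : F ⊣ G)
    (twist_tri : ∀ c : C, Triangle.mk (adjGH.unit.app c) (p.app c) (q c) ∈ distTriang C)
    (cotwist_tri : ∀ d : D, Triangle.mk (m.app d) (adjGH.counit.app d) (r d) ∈ distTriang D)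
    (c : C) :
    ∃ l' : T_C.obj (H.obj (G.obj c)) ⟶ H.obj (T_D.obj (G.obj c)),
      (H.map (m.app (G.obj c)) ≫ p.app (H.obj (G.obj c))) ≫ l'
        = 𝟙 (H.obj (T_D.obj (G.obj c))) ∧
      l' ≫ (H.map (m.app (G.obj c)) ≫ p.app (H.obj (G.obj c)))
        = 𝟙 (T_C.obj (H.obj (G.obj c))) := by
  -- C-side data on B := H (G (H (G c)))
  set u' : H.obj (G.obj c) ⟶ H.obj (G.obj (H.obj (G.obj c))) :=
    adjGH.unit.app (H.obj (G.obj c)) with hu'def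
  set ρ' : H.obj (G.obj (H.obj (G.obj c))) ⟶ H.obj (G.obj c) :=
    H.map (adjGH.counit.app (G.obj c)) with hρ'def
  set pp' : H.obj (G.obj (H.obj (G.obj c))) ⟶ T_C.obj (H.obj (G.obj c)) :=
    p.app (H.obj (G.obj c)) with hpp'def
  set j' : H.obj (T_D.obj (G.obj c)) ⟶ H.obj (G.obj (H.obj (G.obj c))) :=
    H.map (m.app (G.obj c)) with hj'def
  have huρ : u' ≫ ρ' = 𝟙 (H.obj (G.obj c)) := adjGH.right_triangle_components (G.obj c)
  have hmc : m.app (G.obj c) ≫ adjGH.counit.app (G.obj c) = 0 := by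
    exact comp_distTriang_mor_zero₁₂ _ (cotwist_tri (G.obj c))
  have hjρ : j' ≫ ρ' = 0 := by
    rw [hj'def, hρ'def, ← H.map_comp, hmc, H_map_zero G H adjGH]
  have hup : u' ≫ pp' = 0 := by
    exact comp_distTriang_mor_zero₁₂ _ (twist_tri (H.obj (G.obj c)))
  have hq0 : (Triangle.mk (adjGH.unit.app (H.obj (G.obj c)))
      (p.app (H.obj (G.obj c))) (q (H.obj (G.obj c)))).mor₃ = 0 := by
    exact mor₃_zero_of_retr _ (twist_tri (H.obj (G.obj c))) ρ' huρ
  obtain ⟨s₀, hs₀⟩ := sec_of_mor₃_zero _ (twist_tri (H.obj (G.obj c))) hq0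
  set s : T_C.obj (H.obj (G.obj c)) ⟶ H.obj (G.obj (H.obj (G.obj c))) := s₀ with hsdef
  have hs : s ≫ pp' = 𝟙 (T_C.obj (H.obj (G.obj c))) := hs₀
  -- κ at A := H (G c)
  obtain ⟨νκ, hκ1, hκ2⟩ := kappa G H adjGH T_C p q T_D m r twist_tri cotwist_tri
    (H.obj (G.obj c))
  set uκ : G.obj (H.obj (G.obj c)) ⟶ G.obj (H.obj (G.obj (H.obj (G.obj c)))) :=
    G.map (adjGH.unit.app (H.obj (G.obj c))) with huκdef
  set ρκ : G.obj (H.obj (G.obj (H.obj (G.obj c)))) ⟶ G.obj (H.obj (G.obj c)) :=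
    adjGH.counit.app (G.obj (H.obj (G.obj c))) with hρκdef
  set ppκ : G.obj (H.obj (G.obj (H.obj (G.obj c)))) ⟶ G.obj (T_C.obj (H.obj (G.obj c))) :=
    G.map (p.app (H.obj (G.obj c))) with hppκdef
  set jκ : T_D.obj (G.obj (H.obj (G.obj c))) ⟶ G.obj (H.obj (G.obj (H.obj (G.obj c)))) :=
    m.app (G.obj (H.obj (G.obj c))) with hjκdef
  have hκ1' : (jκ ≫ ppκ) ≫ νκ = 𝟙 (T_D.obj (G.obj (H.obj (G.obj c)))) := hκ1
  have hκ2' : νκ ≫ (jκ ≫ ppκ) = 𝟙 (G.obj (T_C.obj (H.obj (G.obj c)))) := hκ2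
  have huκρκ : uκ ≫ ρκ = 𝟙 (G.obj (H.obj (G.obj c))) :=
    adjGH.left_triangle_components (H.obj (G.obj c))
  have hjκρκ : jκ ≫ ρκ = 0 := by
    exact comp_distTriang_mor_zero₁₂ _ (cotwist_tri (G.obj (H.obj (G.obj c))))
  have huκpκ : uκ ≫ ppκ = 0 := by
    have h12 : adjGH.unit.app (H.obj (G.obj c)) ≫ p.app (H.obj (G.obj c)) = 0 := by
      exact comp_distTriang_mor_zero₁₂ _ (twist_tri (H.obj (G.obj c)))
    rw [huκdef, hppκdef, ← G.map_comp, h12, G.map_zero]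
  -- coyoneda for the G-image of the twist triangle at H (G c)
  have hGT1A : G.mapTriangle.obj (Triangle.mk (adjGH.unit.app (H.obj (G.obj c)))
      (p.app (H.obj (G.obj c))) (q (H.obj (G.obj c)))) ∈ distTriang D :=
    G.map_distinguished _ (twist_tri (H.obj (G.obj c)))
  have H1κ : ∀ (x : G.obj (H.obj (G.obj (H.obj (G.obj c)))) ⟶
      G.obj (H.obj (G.obj (H.obj (G.obj c))))),
      x ≫ ppκ = 0 →
      ∃ y : G.obj (H.obj (G.obj (H.obj (G.obj c)))) ⟶ G.obj (H.obj (G.obj c)),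
        x = y ≫ uκ := by
    intro x hx
    obtain ⟨y, hy⟩ := Triangle.coyoneda_exact₂ _ hGT1A x (by exact hx)
    exact ⟨y, hy⟩
  -- P1
  have P1 : ppκ ≫ νκ ≫ jκ = 𝟙 (G.obj (H.obj (G.obj (H.obj (G.obj c))))) - ρκ ≫ uκ := by
    have hx : (ppκ ≫ νκ ≫ jκ - (𝟙 (G.obj (H.obj (G.obj (H.obj (G.obj c))))) - ρκ ≫ uκ))
        ≫ ppκ = 0 := by
      simp only [Preadditive.sub_comp, Category.id_comp, Category.assoc]
      rw [hκ2']
      simp only [Category.comp_id]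
      rw [← Category.assoc ρκ uκ ppκ, Category.assoc ρκ, huκpκ, comp_zero, sub_zero, sub_self]
    obtain ⟨y, hy⟩ := H1κ _ hx
    have hy0 : y = 0 := by
      have h1 : y = (ppκ ≫ νκ ≫ jκ - (𝟙 (G.obj (H.obj (G.obj (H.obj (G.obj c)))))
          - ρκ ≫ uκ)) ≫ ρκ := by
        rw [hy, Category.assoc, huκρκ, Category.comp_id]
      rw [h1]
      simp only [Preadditive.sub_comp, Category.id_comp, Category.assoc]
      rw [hjκρκ]
      simp only [comp_zero]
      rw [huκρκ, Category.comp_id]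
      simp
    have h2 := hy
    rw [hy0, zero_comp] at h2
    exact sub_eq_zero.mp h2
  -- t-hat
  set th : G.obj (H.obj (G.obj (H.obj (G.obj c)))) ⟶ T_D.obj (G.obj c) :=
    -(ppκ ≫ νκ ≫ T_D.map (adjGH.counit.app (G.obj c))) with hthdef
  set w : G.obj (H.obj (G.obj (H.obj (G.obj c)))) ⟶ G.obj (H.obj (G.obj c)) :=
    G.map (H.map (adjGH.counit.app (G.obj c))) with hwdef
  have hnat1 : T_D.map (adjGH.counit.app (G.obj c)) ≫ m.app (G.obj c) = jκ ≫ w := by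
    rw [hjκdef, hwdef]
    simpa using m.naturality (adjGH.counit.app (G.obj c))
  have huκw : uκ ≫ w = 𝟙 (G.obj (H.obj (G.obj c))) := by
    rw [huκdef, hwdef, ← G.map_comp]; erw [adjGH.right_triangle_components, G.map_id]
  have Eb : th ≫ m.app (G.obj c) = ρκ - w := by
    rw [hthdef]
    rw [Preadditive.neg_comp, Category.assoc, Category.assoc, hnat1]
    rw [← Category.assoc νκ, ← Category.assoc ppκ, P1]
    simp only [Preadditive.sub_comp, Category.id_comp, Category.assoc]
    rw [huκw, Category.comp_id, neg_sub]
  -- Ea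
  set gm : G.obj (H.obj (T_D.obj (G.obj c))) ⟶ G.obj (H.obj (G.obj (H.obj (G.obj c)))) :=
    G.map (H.map (m.app (G.obj c))) with hgmdef
  have hnat2 : gm ≫ ρκ = adjGH.counit.app (T_D.obj (G.obj c)) ≫ m.app (G.obj c) := by
    rw [hgmdef, hρκdef]
    simpa using adjGH.counit.naturality (m.app (G.obj c))
  have hgw : gm ≫ w = 0 := by
    rw [hgmdef, hwdef, ← G.map_comp, ← H.map_comp, hmc, H_map_zero G H adjGH, G.map_zero]
  have hδm : (gm ≫ th) ≫ m.app (G.obj c)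
      = adjGH.counit.app (T_D.obj (G.obj c)) ≫ m.app (G.obj c) := by
    rw [Category.assoc, Eb, Preadditive.comp_sub, hgw, sub_zero, hnat2]
  obtain ⟨τ₁₀, hτ₁₀⟩ := retr_of_mor₃_zero _ (cotwist_tri (G.obj c))
    (by exact r_Gc_zero G H adjGH T_D m r cotwist_tri c)
  set τ₁ : G.obj (H.obj (G.obj c)) ⟶ T_D.obj (G.obj c) := τ₁₀ with hτ₁def
  have hτ₁ : m.app (G.obj c) ≫ τ₁ = 𝟙 (T_D.obj (G.obj c)) := hτ₁₀
  have Ea : gm ≫ th = adjGH.counit.app (T_D.obj (G.obj c)) := by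
    calc gm ≫ th = (gm ≫ th) ≫ 𝟙 (T_D.obj (G.obj c)) := by rw [Category.comp_id]
      _ = (gm ≫ th) ≫ (m.app (G.obj c) ≫ τ₁) := by rw [hτ₁]
      _ = ((gm ≫ th) ≫ m.app (G.obj c)) ≫ τ₁ := by simp only [Category.assoc]
      _ = (adjGH.counit.app (T_D.obj (G.obj c)) ≫ m.app (G.obj c)) ≫ τ₁ := by rw [hδm]
      _ = adjGH.counit.app (T_D.obj (G.obj c)) ≫ (m.app (G.obj c) ≫ τ₁) := by
          rw [Category.assoc]
      _ = adjGH.counit.app (T_D.obj (G.obj c)) := by rw [hτ₁]; simp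
  -- t
  set t : H.obj (G.obj (H.obj (G.obj c))) ⟶ H.obj (T_D.obj (G.obj c)) :=
    adjGH.unit.app (H.obj (G.obj (H.obj (G.obj c)))) ≫ H.map th with htdef
  have hjt : j' ≫ t = 𝟙 (H.obj (T_D.obj (G.obj c))) := by
    have hun : j' ≫ adjGH.unit.app (H.obj (G.obj (H.obj (G.obj c))))
        = adjGH.unit.app (H.obj (T_D.obj (G.obj c))) ≫ H.map gm := by
      rw [hj'def, hgmdef]
      simpa using (adjGH.unit.naturality (H.map (m.app (G.obj c)))).symm
    rw [htdef, ← Category.assoc, hun, Category.assoc, ← H.map_comp, Ea]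
    exact adjGH.right_triangle_components (T_D.obj (G.obj c))
  have htj : t ≫ j' = 𝟙 (H.obj (G.obj (H.obj (G.obj c)))) - ρ' ≫ u' := by
    have h1 : t ≫ j' = adjGH.unit.app (H.obj (G.obj (H.obj (G.obj c))))
        ≫ H.map (th ≫ m.app (G.obj c)) := by
      rw [htdef, hj'def, Category.assoc, ← H.map_comp]
    rw [h1, Eb, H_map_sub G H adjGH, Preadditive.comp_sub]
    have h2 : adjGH.unit.app (H.obj (G.obj (H.obj (G.obj c)))) ≫ H.map ρκ
        = 𝟙 (H.obj (G.obj (H.obj (G.obj c)))) := by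
      rw [hρκdef]
      exact adjGH.right_triangle_components (G.obj (H.obj (G.obj c)))
    have h3 : adjGH.unit.app (H.obj (G.obj (H.obj (G.obj c)))) ≫ H.map w = ρ' ≫ u' := by
      rw [hwdef, hρ'def, hu'def]
      simpa using (adjGH.unit.naturality (H.map (adjGH.counit.app (G.obj c)))).symm
    rw [h2, h3]
  have H1 : ∀ (x : H.obj (G.obj (H.obj (G.obj c))) ⟶ H.obj (G.obj (H.obj (G.obj c)))),
      x ≫ pp' = 0 →
      ∃ y : H.obj (G.obj (H.obj (G.obj c))) ⟶ H.obj (G.obj c), x = y ≫ u' := by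
    intro x hx
    obtain ⟨y, hy⟩ := Triangle.coyoneda_exact₂ _ (twist_tri (H.obj (G.obj c))) x
      (by exact hx)
    exact ⟨y, hy⟩
  obtain ⟨h1, h2⟩ := bip u' ρ' pp' s j' t huρ hs hjt hjρ hup htj H1
  exact ⟨_, h1, h2⟩



lemma isProj_HGc [T_C.IsEquivalence] (adjFG : F ⊣ G)
    (twist_tri : ∀ c : C, Triangle.mk (adjGH.unit.app c) (p.app c) (q c) ∈ distTriang C)
    (cotwist_tri : ∀ d : D, Triangle.mk (m.app d) (adjGH.counit.app d) (r d) ∈ distTriang D)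
    (c : C) : IsProj G (H.obj (G.obj c)) := by
  set c₂ : C := T_C.objPreimage c with hc₂def
  set θ : T_C.obj c₂ ≅ c := T_C.objObjPreimageIso c with hθdef
  obtain ⟨l', hl1, hl2⟩ := lambda G F H adjGH T_C p q T_D m r adjFG twist_tri cotwist_tri c₂
  obtain ⟨νκ, hκ1, hκ2⟩ := kappa G H adjGH T_C p q T_D m r twist_tri cotwist_tri c₂
  set l : H.obj (T_D.obj (G.obj c₂)) ⟶ T_C.obj (H.obj (G.obj c₂)) :=
    H.map (m.app (G.obj c₂)) ≫ p.app (H.obj (G.obj c₂)) with hldef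
  set k : T_D.obj (G.obj c₂) ⟶ G.obj (T_C.obj c₂) :=
    m.app (G.obj c₂) ≫ G.map (p.app c₂) with hkdef
  set zh : T_C.obj (H.obj (G.obj c₂)) ⟶ H.obj (G.obj c) :=
    l' ≫ H.map k ≫ H.map (G.map θ.hom) with hzhdef
  set zi : H.obj (G.obj c) ⟶ T_C.obj (H.obj (G.obj c₂)) :=
    H.map (G.map θ.inv) ≫ H.map νκ ≫ l with hzidef
  have hνk : H.map νκ ≫ H.map k = 𝟙 (H.obj (G.obj (T_C.obj c₂))) := by
    rw [← H.map_comp, hκ2, H.map_id]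
  have hzz : zi ≫ zh = 𝟙 (H.obj (G.obj c)) := by
    rw [hzidef, hzhdef]
    simp only [Category.assoc]
    rw [reassoc_of% hl1]
    rw [reassoc_of% hνk]
    rw [← H.map_comp, ← G.map_comp, θ.inv_hom_id, G.map_id, H.map_id]
  have hqZ : (Triangle.mk (adjGH.unit.app (H.obj (G.obj c₂))) (p.app (H.obj (G.obj c₂)))
      (q (H.obj (G.obj c₂)))).mor₃ = 0 :=
    mor₃_zero_of_retr _ (twist_tri _) (H.map (adjGH.counit.app (G.obj c₂)))
      (adjGH.right_triangle_components (G.obj c₂))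
  obtain ⟨sZ₀, hsZ₀⟩ := sec_of_mor₃_zero _ (twist_tri (H.obj (G.obj c₂))) hqZ
  set sZ : T_C.obj (H.obj (G.obj c₂)) ⟶ H.obj (G.obj (H.obj (G.obj c₂))) := sZ₀ with hsZdef
  have hsZ : sZ ≫ p.app (H.obj (G.obj c₂)) = 𝟙 (T_C.obj (H.obj (G.obj c₂))) := hsZ₀
  intro Y α hα
  have hu1 : α ≫ (adjGH.unit.app Y)⟦(1:ℤ)⟧' = 0 :=
    postcomp_unit_shift_zero G H adjGH α hα
  obtain ⟨f, hf⟩ : ∃ f : H.obj (G.obj c) ⟶ T_C.obj Y, α = f ≫ q Y :=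
    Triangle.coyoneda_exact₁ _ (twist_tri Y) α (by exact hu1)
  have hf' : α = f ≫ q Y := hf
  obtain ⟨g, hg⟩ := T_C.map_surjective (zh ≫ f)
  have hpn := p.naturality g
  have hpq : p.app Y ≫ q Y = 0 := by
    exact comp_distTriang_mor_zero₂₃ _ (twist_tri Y)
  have hTg : T_C.map g = sZ ≫ (G ⋙ H).map g ≫ p.app Y := by
    calc T_C.map g = 𝟙 (T_C.obj (H.obj (G.obj c₂))) ≫ T_C.map g := by rw [Category.id_comp]
      _ = (sZ ≫ p.app (H.obj (G.obj c₂))) ≫ T_C.map g := by rw [hsZ]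
      _ = sZ ≫ (p.app (H.obj (G.obj c₂)) ≫ T_C.map g) := by rw [Category.assoc]
      _ = sZ ≫ (G ⋙ H).map g ≫ p.app Y := by rw [← hpn]
  calc α = f ≫ q Y := hf'
    _ = (zi ≫ zh) ≫ f ≫ q Y := by rw [hzz, Category.id_comp]
    _ = zi ≫ (zh ≫ f) ≫ q Y := by simp only [Category.assoc]
    _ = zi ≫ T_C.map g ≫ q Y := by rw [hg]
    _ = zi ≫ (sZ ≫ (G ⋙ H).map g ≫ p.app Y) ≫ q Y := by rw [hTg]
    _ = zi ≫ sZ ≫ (G ⋙ H).map g ≫ p.app Y ≫ q Y := by simp only [Category.assoc]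
    _ = 0 := by rw [hpq, comp_zero, comp_zero, comp_zero]

lemma isProj_He [T_C.IsEquivalence] (adjFG : F ⊣ G)
    (twist_tri : ∀ c : C, Triangle.mk (adjGH.unit.app c) (p.app c) (q c) ∈ distTriang C)
    (cotwist_tri : ∀ d : D, Triangle.mk (m.app d) (adjGH.counit.app d) (r d) ∈ distTriang D)
    (e : D) : IsProj G (H.obj e) := by
  intro Y α hα
  have hcore := isProj_HGc G F H adjGH T_C p q T_D m r adjFG twist_tri cotwist_tri (H.obj e)
  have h2 : H.map (adjGH.counit.app e) ≫ α = 0 := by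
    apply hcore Y
    rw [G.map_comp, hα, comp_zero]
  calc α = 𝟙 (H.obj e) ≫ α := by rw [Category.id_comp]
    _ = (adjGH.unit.app (H.obj e) ≫ H.map (adjGH.counit.app e)) ≫ α := by
        erw [adjGH.right_triangle_components]
    _ = adjGH.unit.app (H.obj e) ≫ (H.map (adjGH.counit.app e) ≫ α) := by
        rw [Category.assoc]
    _ = 0 := by rw [h2, comp_zero]

lemma inAddImageH_of_isProj [T_C.IsEquivalence]
    (twist_tri : ∀ c : C, Triangle.mk (adjGH.unit.app c) (p.app c) (q c) ∈ distTriang C)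
    {X : C} (hX : IsProj G X) : InAddImage H X := by
  set c₀ : C := T_C.objPreimage X with hc₀def
  set φ : T_C.obj c₀ ≅ X := T_C.objObjPreimageIso X with hφdef
  have hq0 : q c₀ = 0 := by
    have hα : G.map (φ.inv ≫ q c₀) = 0 := by
      rw [G.map_comp, q_G_zero G H adjGH T_C p q twist_tri c₀, comp_zero]
    have h := hX c₀ (φ.inv ≫ q c₀) hα
    calc q c₀ = φ.hom ≫ (φ.inv ≫ q c₀) := by
          rw [← Category.assoc, φ.hom_inv_id, Category.id_comp]
      _ = 0 := by rw [h, comp_zero]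
  obtain ⟨s₂, hs₂⟩ : ∃ s : T_C.obj c₀ ⟶ H.obj (G.obj c₀), s ≫ p.app c₀ = 𝟙 (T_C.obj c₀) :=
    sec_of_mor₃_zero _ (twist_tri c₀) (by exact hq0)
  refine ⟨G.obj c₀, φ.inv ≫ s₂, p.app c₀ ≫ φ.hom, ?_⟩
  have hs₂' : s₂ ≫ p.app c₀ = 𝟙 (T_C.obj c₀) := hs₂
  calc (φ.inv ≫ s₂) ≫ p.app c₀ ≫ φ.hom = φ.inv ≫ (s₂ ≫ p.app c₀) ≫ φ.hom := by
        simp only [Category.assoc]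
    _ = φ.inv ≫ 𝟙 (T_C.obj c₀) ≫ φ.hom := by rw [hs₂']
    _ = 𝟙 X := by rw [Category.id_comp, φ.inv_hom_id]

lemma inAddImageH_of_isInj
    (twist_tri : ∀ c : C, Triangle.mk (adjGH.unit.app c) (p.app c) (q c) ∈ distTriang C)
    {X : C} (hX : IsInj G X) : InAddImage H X := by
  have hq0 : q X = 0 := hX (T_C.obj X) (q X) (q_G_zero G H adjGH T_C p q twist_tri X)
  obtain ⟨ρ₂, hρ₂⟩ := retr_of_mor₃_zero _ (twist_tri X) (by exact hq0)
  exact ⟨G.obj X, adjGH.unit.app X, ρ₂, hρ₂⟩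

lemma counit_cone (adjFG : F ⊣ G) (X : C) :
    ∃ (W : C) (gg : X ⟶ W) (ww : W ⟶ ((G ⋙ F).obj X)⟦(1:ℤ)⟧),
    (Triangle.mk (adjFG.counit.app X) gg ww ∈ distTriang C) ∧ G.map gg = 0 := by
  obtain ⟨W, gg, ww, hT⟩ :=
    Pretriangulated.distinguished_cocone_triangle (adjFG.counit.app X)
  refine ⟨W, gg, ww, hT, ?_⟩
  have h12 : adjFG.counit.app X ≫ gg = 0 := by
    exact comp_distTriang_mor_zero₁₂ _ hT
  have hsec : adjFG.unit.app (G.obj X) ≫ G.map (adjFG.counit.app X) = 𝟙 (G.obj X) :=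
    adjFG.right_triangle_components X
  calc G.map gg = 𝟙 (G.obj X) ≫ G.map gg := by rw [Category.id_comp]
    _ = (adjFG.unit.app (G.obj X) ≫ G.map (adjFG.counit.app X)) ≫ G.map gg := by
        rw [hsec]
    _ = adjFG.unit.app (G.obj X) ≫ (G.map (adjFG.counit.app X) ≫ G.map gg) := by
        rw [Category.assoc]
    _ = 0 := by rw [← G.map_comp, h12, G.map_zero, comp_zero]

lemma invRotate_mor₃_G_zero (adjFG : F ⊣ G) {X W : C} (gg : X ⟶ W)
    (ww : W ⟶ ((G ⋙ F).obj X)⟦(1:ℤ)⟧) (hGg : G.map gg = 0) :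
    G.map (Triangle.mk (adjFG.counit.app X) gg ww).invRotate.mor₃ = 0 := by
  have h : (Triangle.mk (adjFG.counit.app X) gg ww).invRotate.mor₃
      = gg ≫ (shiftEquiv C (1:ℤ)).counitIso.inv.app W := rfl
  rw [h]
  exact (G.map_comp (X := X) (Y := W) gg ((shiftEquiv C (1:ℤ)).counitIso.inv.app W)).trans
    (by rw [hGg, zero_comp]; rfl)

lemma hasProjRes (adjFG : F ⊣ G) (X : C) : HasProjResolution G X := by
  obtain ⟨W, gg, ww, hT, hGg⟩ := counit_cone G F adjFG X
  refine ⟨W⟦(-1:ℤ)⟧, (G ⋙ F).obj X,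
    (Triangle.mk (adjFG.counit.app X) gg ww).invRotate.mor₁,
    adjFG.counit.app X,
    (Triangle.mk (adjFG.counit.app X) gg ww).invRotate.mor₃, ?_, ?_, ?_⟩
  · exact inv_rot_of_distTriang _ hT
  · exact invRotate_mor₃_G_zero G F adjFG gg ww hGg
  · exact isProj_F G F adjFG (G.obj X)

lemma inAddImageF_of_isProj (adjFG : F ⊣ G) {X : C} (hX : IsProj G X) :
    InAddImage F X := by
  obtain ⟨W, gg, ww, hT, hGg⟩ := counit_cone G F adjFG X
  have hT' := inv_rot_of_distTriang _ hT
  have hm3 : (Triangle.mk (adjFG.counit.app X) gg ww).invRotate.mor₃ = 0 := by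
    exact hX (W⟦(-1:ℤ)⟧) (Triangle.mk (adjFG.counit.app X) gg ww).invRotate.mor₃
      (invRotate_mor₃_G_zero G F adjFG gg ww hGg)
  obtain ⟨s₃, hs₃⟩ := sec_of_mor₃_zero _ hT' hm3
  exact ⟨G.obj X, s₃, adjFG.counit.app X, hs₃⟩

lemma hasInjRes
    (twist_tri : ∀ c : C, Triangle.mk (adjGH.unit.app c) (p.app c) (q c) ∈ distTriang C)
    (X : C) : HasInjResolution G X :=
  ⟨(G ⋙ H).obj X, T_C.obj X, adjGH.unit.app X, p.app X, q X, twist_tri X,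
    q_G_zero G H adjGH T_C p q twist_tri X, isInj_H G H adjGH (G.obj X)⟩

end Twist




theorem spherical_gives_frobenius
    (G : C ⥤ D) [G.CommShift ℤ] [G.IsTriangulated]
    (F : D ⥤ C) (H : D ⥤ C)
    (adjFG : F ⊣ G) (adjGH : G ⊣ H)
    -- the twist `T_C = cof(id_C → HG)`, with triangles `c → HG(c) → T_C(c) → c[1]`
    (T_C : C ⥤ C) [T_C.IsEquivalence]
    (p : (G ⋙ H) ⟶ T_C) (q : ∀ c : C, T_C.obj c ⟶ c⟦(1:ℤ)⟧)
    (twist_tri : ∀ c : C,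
      Triangle.mk (adjGH.unit.app c) (p.app c) (q c) ∈ distTriang C)
    -- the cotwist `T_D = fib(GH → id_D)` of the adjunction `G ⊣ H`, with triangles
    -- `T_D(d) → G(H(d)) → d → T_D(d)[1]` whose second map is the counit
    (T_D : D ⥤ D) [T_D.IsEquivalence]
    (m : T_D ⟶ (H ⋙ G)) (r : ∀ d : D, d ⟶ (T_D.obj d)⟦(1:ℤ)⟧)
    (cotwist_tri : ∀ d : D,
      Triangle.mk (m.app d) (adjGH.counit.app d) (r d) ∈ distTriang D) :
    -- (1)
    (∀ d : D, IsInj G (F.obj d)) ∧ (∀ d : D, IsProj G (H.obj d)) ∧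
    -- (2)
    (∀ X : C, HasProjResolution G X) ∧ (∀ X : C, HasInjResolution G X) ∧
    -- (3)
    (∀ X : C, IsInj G X ↔ InAddImage H X) ∧
    (∀ X : C, IsProj G X ↔ InAddImage H X) ∧
    (∀ X : C, IsInj G X ↔ InAddImage F X) ∧
    (∀ X : C, IsProj G X ↔ InAddImage F X) := by
  have isProjHe : ∀ e : D, IsProj G (H.obj e) := fun e =>
    isProj_He G F H adjGH T_C p q T_D m r adjFG twist_tri cotwist_tri e
  have projToH : ∀ X : C, IsProj G X → InAddImage H X := fun X hX =>
    inAddImageH_of_isProj G H adjGH T_C p q twist_tri hX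
  have injToH : ∀ X : C, IsInj G X → InAddImage H X := fun X hX =>
    inAddImageH_of_isInj G H adjGH T_C p q twist_tri hX
  have projToF : ∀ X : C, IsProj G X → InAddImage F X := fun X hX =>
    inAddImageF_of_isProj G F adjFG hX
  have Hinj : ∀ X : C, InAddImage H X → IsInj G X := by
    rintro X ⟨e, s, rr, h⟩
    exact isInj_of_retract G (isInj_H G H adjGH e) s rr h
  have Hproj : ∀ X : C, InAddImage H X → IsProj G X := by
    rintro X ⟨e, s, rr, h⟩
    exact isProj_of_retract G (isProjHe e) s rr h
  have Fproj : ∀ X : C, InAddImage F X → IsProj G X := by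
    rintro X ⟨e, s, rr, h⟩
    exact isProj_of_retract G (isProj_F G F adjFG e) s rr h
  have injProj : ∀ X : C, IsInj G X → IsProj G X := fun X hX => Hproj X (injToH X hX)
  have projInj : ∀ X : C, IsProj G X → IsInj G X := fun X hX => Hinj X (projToH X hX)
  refine ⟨fun d => projInj _ (isProj_F G F adjFG d), isProjHe,
    fun X => hasProjRes G F adjFG X,
    fun X => hasInjRes G H adjGH T_C p q twist_tri X,
    fun X => ⟨injToH X, Hinj X⟩,
    fun X => ⟨fun h => projToH X h, Hproj X⟩,
    fun X => ⟨fun h => projToF X (injProj X h), fun h => projInj X (Fproj X h)⟩,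
    fun X => ⟨projToF X, Fproj X⟩⟩


end Stmt6
end

section
/- Let (C, E, s) be a Frobenius extriangulated category with finite-dimensional Hom-spaces over a field k, and let T ∈ C be a basic rigid object (E(T,T) = 0). Then T is cluster tilting (i.e. every X ∈ C admits a conflation T_1 → T_0 → X with T_0, T_1 in Add(T)) if and only if for every object X, E(X, T) = 0 implies X ∈ Add(T). -/
/-!
STATEMENT 7: Let (C, E, s) be a Frobenius extriangulated category with
finite-dimensional Hom-spaces over a field k, and let T be a basic rigid object.
Then T is cluster tilting (every X admits a conflation T₁ → T₀ → X with
T₀, T₁ ∈ Add(T)) if and only if for every X, E(X,T) = 0 implies X ∈ Add(T).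
-/

open CategoryTheory Limits Opposite

universe v u w

variable (k : Type) [Field k]

/-- A (k-linear) extriangulated category structure in the sense of Nakaoka–Palu on a
preadditive k-linear category `C`: a biadditive extension functor `E`, a realization
relation `realizes α f g` expressing that the conflation `A → B → Z` realizes the
extension `α ∈ E(Z, A)`, together with the axioms used in this paper: existence of
realizations, split = zero, and the long exact `Hom`–`E` sequences associated to a
conflation (Nakaoka–Palu; Gorsky–Nakaoka–Palu Thm 3.5). -/
structure Extriangulated (C : Type u) [Category.{v} C] [Preadditive C]
    [CategoryTheory.Linear k C] where
  E : Cᵒᵖ ⥤ C ⥤ ModuleCat.{w} k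
  realizes : ∀ {A Z : C}, ((E.obj (op Z)).obj A) → ∀ {B : C}, (A ⟶ B) → (B ⟶ Z) → Prop
  realize_exists : ∀ {A Z : C} (α : (E.obj (op Z)).obj A),
    ∃ (B : C) (f : A ⟶ B) (g : B ⟶ Z), realizes α f g
  comp_zero : ∀ {A Z B : C} (α : (E.obj (op Z)).obj A) (f : A ⟶ B) (g : B ⟶ Z),
    realizes α f g → f ≫ g = 0
  realizes_zero : ∀ {A Z B : C} (f : A ⟶ B) (g : B ⟶ Z),
    realizes (0 : (E.obj (op Z)).obj A) f g →
      (∃ r : B ⟶ A, f ≫ r = 𝟙 A) ∧ (∃ s : Z ⟶ B, s ≫ g = 𝟙 Z)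
  split_zero : ∀ {A Z B : C} (α : (E.obj (op Z)).obj A) (f : A ⟶ B) (g : B ⟶ Z),
    realizes α f g → (∃ r : B ⟶ A, f ≫ r = 𝟙 A) → α = 0
  ex₁ : ∀ {A Z B T : C} (α : (E.obj (op Z)).obj A) (f : A ⟶ B) (g : B ⟶ Z),
    realizes α f g → ∀ (h : T ⟶ B), h ≫ g = 0 → ∃ h' : T ⟶ A, h' ≫ f = h
  ex₂ : ∀ {A Z B T : C} (α : (E.obj (op Z)).obj A) (f : A ⟶ B) (g : B ⟶ Z),
    realizes α f g → ∀ (h : T ⟶ Z), ((E.map h.op).app A) α = 0 → ∃ h' : T ⟶ B, h' ≫ g = h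
  ex₂' : ∀ {A Z B T : C} (α : (E.obj (op Z)).obj A) (f : A ⟶ B) (g : B ⟶ Z),
    realizes α f g → ∀ (h' : T ⟶ B), ((E.map (h' ≫ g).op).app A) α = 0
  ex₃ : ∀ {A Z B T : C} (α : (E.obj (op Z)).obj A) (f : A ⟶ B) (g : B ⟶ Z),
    realizes α f g → ∀ (β : (E.obj (op T)).obj A), ((E.obj (op T)).map f) β = 0 →
      ∃ h : T ⟶ Z, ((E.map h.op).app A) α = β
  ex₃' : ∀ {A Z B T : C} (α : (E.obj (op Z)).obj A) (f : A ⟶ B) (g : B ⟶ Z),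
    realizes α f g → ∀ (h : T ⟶ Z), ((E.obj (op T)).map f) (((E.map h.op).app A) α) = 0
  ex₄ : ∀ {A Z B T : C} (α : (E.obj (op Z)).obj A) (f : A ⟶ B) (g : B ⟶ Z),
    realizes α f g → ∀ (h : B ⟶ T), f ≫ h = 0 → ∃ h' : Z ⟶ T, g ≫ h' = h
  ex₅ : ∀ {A Z B T : C} (α : (E.obj (op Z)).obj A) (f : A ⟶ B) (g : B ⟶ Z),
    realizes α f g → ∀ (h : A ⟶ T), ((E.obj (op Z)).map h) α = 0 → ∃ h' : B ⟶ T, f ≫ h' = h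
  ex₅' : ∀ {A Z B T : C} (α : (E.obj (op Z)).obj A) (f : A ⟶ B) (g : B ⟶ Z),
    realizes α f g → ∀ (h' : B ⟶ T), ((E.obj (op Z)).map (f ≫ h')) α = 0
  ex₆ : ∀ {A Z B T : C} (α : (E.obj (op Z)).obj A) (f : A ⟶ B) (g : B ⟶ Z),
    realizes α f g → ∀ (β : (E.obj (op Z)).obj T), ((E.map g.op).app T) β = 0 →
      ∃ h : A ⟶ T, ((E.obj (op Z)).map h) α = β
  ex₆' : ∀ {A Z B T : C} (α : (E.obj (op Z)).obj A) (f : A ⟶ B) (g : B ⟶ Z),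
    realizes α f g → ∀ (h : A ⟶ T), ((E.map g.op).app T) (((E.obj (op Z)).map h) α) = 0

namespace Extriangulated

variable {k} {C : Type u} [Category.{v} C] [Preadditive C] [CategoryTheory.Linear k C]
  [HasFiniteBiproducts C]

/-- `(f, g)` is a conflation: it realizes some extension class. -/
def Conflation (σ : Extriangulated k C) {A B Z : C} (f : A ⟶ B) (g : B ⟶ Z) : Prop :=
  ∃ α, σ.realizes α f g

/-- `P` is projective: `E(P, X) = 0` for all `X`. -/
def Projective (σ : Extriangulated k C) (P : C) : Prop :=
  ∀ (X : C) (α : (σ.E.obj (op P)).obj X), α = 0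

/-- `I` is injective: `E(X, I) = 0` for all `X`. -/
def Injective (σ : Extriangulated k C) (I : C) : Prop :=
  ∀ (X : C) (α : (σ.E.obj (op X)).obj I), α = 0

/-- `C` has enough projectives: every `X` admits a conflation `K → P → X` with `P`
projective. -/
def EnoughProjectives (σ : Extriangulated k C) : Prop :=
  ∀ X : C, ∃ (K P : C) (f : K ⟶ P) (g : P ⟶ X),
    σ.Conflation f g ∧ σ.Projective P

/-- `C` has enough injectives: every `X` admits a conflation `X → I → K` with `I`
injective. -/
def EnoughInjectives (σ : Extriangulated k C) : Prop :=
  ∀ X : C, ∃ (I K : C) (f : X ⟶ I) (g : I ⟶ K),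
    σ.Conflation f g ∧ σ.Injective I

/-- Frobenius: enough projectives and injectives, and the two classes coincide. -/
def Frobenius (σ : Extriangulated k C) : Prop :=
  σ.EnoughProjectives ∧ σ.EnoughInjectives ∧ ∀ X : C, (σ.Projective X ↔ σ.Injective X)

/-- `T` is rigid: `E(T, T) = 0`. -/
def Rigid (σ : Extriangulated k C) (T : C) : Prop :=
  ∀ α : (σ.E.obj (op T)).obj T, α = 0

/-- `σ` is extriangulated 2-Calabi–Yau: there is a bifunctorial duality
`E(X,Y) ≅ E(Y,X)^*`. -/
def CY2 (σ : Extriangulated k C) : Prop :=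
  ∃ e : ∀ X Y : C,
      ((σ.E.obj (op X)).obj Y) ≃ₗ[k] Module.Dual k ((σ.E.obj (op Y)).obj X),
    (∀ (X X' Y : C) (f : X' ⟶ X) (β : (σ.E.obj (op X)).obj Y)
        (γ : (σ.E.obj (op Y)).obj X'),
      e X' Y (((σ.E.map f.op).app Y) β) γ = e X Y β (((σ.E.obj (op Y)).map f) γ)) ∧
    (∀ (X Y Y' : C) (g : Y' ⟶ Y) (β : (σ.E.obj (op X)).obj Y')
        (γ : (σ.E.obj (op Y)).obj X),
      e X Y (((σ.E.obj (op X)).map g) β) γ = e X Y' β (((σ.E.map g.op).app X) γ))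

end Extriangulated

/-- `X` is in the additive closure of `T`: a retract of a finite direct sum of copies
of `T`. -/
def InAdd {C : Type u} [Category.{v} C] [Preadditive C] [HasFiniteBiproducts C]
    (T X : C) : Prop :=
  ∃ (n : ℕ) (s : X ⟶ ⨁ (fun _ : Fin n => T)) (r : (⨁ fun _ : Fin n => T) ⟶ X),
    s ≫ r = 𝟙 X

/-- `X` is indecomposable. -/
def Indecomposable {C : Type u} [Category.{v} C] [Preadditive C] [HasFiniteBiproducts C]
    (X : C) : Prop :=
  letI := hasBinaryBiproducts_of_finite_biproducts C
  ¬ IsZero X ∧ ∀ Y Z : C, Nonempty (X ≅ Y ⊞ Z) → IsZero Y ∨ IsZero Z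

/-- `T` is basic: it decomposes into finitely many pairwise non-isomorphic
indecomposable direct summands. -/
def Basic {C : Type u} [Category.{v} C] [Preadditive C] [HasFiniteBiproducts C]
    (T : C) : Prop :=
  ∃ (n : ℕ) (M : Fin n → C), (∀ i, Indecomposable (M i)) ∧
    (∀ i j, i ≠ j → IsEmpty (M i ≅ M j)) ∧ Nonempty (T ≅ ⨁ M)


namespace Stmt7

variable {k} {C : Type u} [Category.{v} C] [Preadditive C] [CategoryTheory.Linear k C]
  [HasFiniteBiproducts C]

lemma pull_id (σ : Extriangulated k C) {Z A : C} (θ : (σ.E.obj (op Z)).obj A) :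
    (σ.E.map (𝟙 Z).op).app A θ = θ := by
  simp [op_id]

lemma push_id (σ : Extriangulated k C) {Z A : C} (θ : (σ.E.obj (op Z)).obj A) :
    (σ.E.obj (op Z)).map (𝟙 A) θ = θ := by
  simp

lemma pull_pull (σ : Extriangulated k C) {V W Z A : C} (b : V ⟶ W) (a : W ⟶ Z)
    (θ : (σ.E.obj (op Z)).obj A) :
    (σ.E.map b.op).app A ((σ.E.map a.op).app A θ) = (σ.E.map (b ≫ a).op).app A θ := by
  rw [op_comp, Functor.map_comp, NatTrans.comp_app]
  rfl

lemma push_push (σ : Extriangulated k C) {Z A A' A'' : C} (h : A ⟶ A') (h' : A' ⟶ A'')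
    (θ : (σ.E.obj (op Z)).obj A) :
    (σ.E.obj (op Z)).map h' ((σ.E.obj (op Z)).map h θ)
      = (σ.E.obj (op Z)).map (h ≫ h') θ := by
  rw [Functor.map_comp]
  rfl

lemma pull_push_comm (σ : Extriangulated k C) {W Z A A' : C} (g : W ⟶ Z) (h : A ⟶ A')
    (θ : (σ.E.obj (op Z)).obj A) :
    (σ.E.map g.op).app A' ((σ.E.obj (op Z)).map h θ)
      = (σ.E.obj (op W)).map h ((σ.E.map g.op).app A θ) := by
  have h2 : ((σ.E.obj (op Z)).map h ≫ (σ.E.map g.op).app A') θ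
      = ((σ.E.map g.op).app A ≫ (σ.E.obj (op W)).map h) θ := by
    rw [NatTrans.naturality]
  rw [CategoryTheory.comp_apply, CategoryTheory.comp_apply] at h2
  exact h2

lemma isZero_E_base (σ : Extriangulated k C) {Z A : C} (hZ : IsZero Z)
    (θ : (σ.E.obj (op Z)).obj A) : θ = 0 := by
  obtain ⟨B, f, g, hr⟩ := σ.realize_exists θ
  have h := σ.ex₂' θ f g hr (0 : Z ⟶ B)
  have hzid : (0 : Z ⟶ B) ≫ g = 𝟙 Z := hZ.eq_of_src _ _
  rw [hzid, pull_id] at h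
  exact h

lemma pull_zero_mor (σ : Extriangulated k C) {W Z A : C} (θ : (σ.E.obj (op Z)).obj A) :
    (σ.E.map (0 : W ⟶ Z).op).app A θ = 0 := by
  obtain ⟨Z₀, hZ₀⟩ := (inferInstance : HasZeroObject C)
  have hsplit : (0 : W ⟶ Z) = (0 : W ⟶ Z₀) ≫ (0 : Z₀ ⟶ Z) := by simp
  rw [hsplit, ← pull_pull]
  rw [isZero_E_base σ hZ₀ ((σ.E.map (0 : Z₀ ⟶ Z).op).app A θ)]
  exact map_zero _

/-- Joint injectivity of pullbacks along a family with `∑ hh i ≫ kk i = 𝟙`. -/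
lemma pull_jointly_inj (σ : Extriangulated k C) {Zb A : C} {ι : Type} [Fintype ι]
    {D : ι → C} (kk : ∀ i, D i ⟶ Zb) (hh : ∀ i, Zb ⟶ D i)
    (htot : ∑ i, hh i ≫ kk i = 𝟙 Zb) (β : (σ.E.obj (op Zb)).obj A)
    (hv : ∀ i, (σ.E.map (kk i).op).app A β = 0) : β = 0 := by
  obtain ⟨Y, u, v, hr⟩ := σ.realize_exists β
  have lifts : ∀ i, ∃ j : D i ⟶ Y, j ≫ v = kk i := fun i => σ.ex₂ β u v hr (kk i) (hv i)
  choose j hj using lifts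
  have hw : (∑ i, hh i ≫ j i) ≫ v = 𝟙 Zb := by
    rw [Preadditive.sum_comp]
    simp_rw [Category.assoc, hj]
    exact htot
  have h0 := σ.ex₂' β u v hr (∑ i, hh i ≫ j i)
  rw [hw, pull_id] at h0
  exact h0

/-- Joint injectivity of pushforwards along a family with `∑ kk i ≫ hh i = 𝟙`. -/
lemma push_jointly_inj (σ : Extriangulated k C) {Zb A : C} {ι : Type} [Fintype ι]
    {D : ι → C} (kk : ∀ i, A ⟶ D i) (hh : ∀ i, D i ⟶ A)
    (htot : ∑ i, kk i ≫ hh i = 𝟙 A) (β : (σ.E.obj (op Zb)).obj A)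
    (hv : ∀ i, (σ.E.obj (op Zb)).map (kk i) β = 0) : β = 0 := by
  obtain ⟨Y, u, v, hr⟩ := σ.realize_exists β
  have lifts : ∀ i, ∃ j : Y ⟶ D i, u ≫ j = kk i := fun i => σ.ex₅ β u v hr (kk i) (hv i)
  choose j hj using lifts
  have hw : u ≫ (∑ i, j i ≫ hh i) = 𝟙 A := by
    rw [Preadditive.comp_sum]
    simp_rw [← Category.assoc, hj]
    exact htot
  have h0 := σ.ex₅' β u v hr (∑ i, j i ≫ hh i)
  rw [hw, push_id] at h0
  exact h0

/-- Additivity of pullback in the morphism. -/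
lemma pull_add (σ : Extriangulated k C) {W Z A : C} (a b : W ⟶ Z)
    (θ : (σ.E.obj (op Z)).obj A) :
    (σ.E.map (a + b).op).app A θ
      = (σ.E.map a.op).app A θ + (σ.E.map b.op).app A θ := by
  letI : HasBinaryBiproducts C := hasBinaryBiproducts_of_finite_biproducts C
  set β := (σ.E.map (biprod.desc (𝟙 Z) (𝟙 Z)).op).app A θ with hβ
  have hdec : β = (σ.E.map (biprod.fst : Z ⊞ Z ⟶ Z).op).app A θ
      + (σ.E.map (biprod.snd : Z ⊞ Z ⟶ Z).op).app A θ := by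
    have hkey : ∀ γ : (σ.E.obj (op (Z ⊞ Z))).obj A,
        (σ.E.map (biprod.inl : Z ⟶ Z ⊞ Z).op).app A γ = 0 →
        (σ.E.map (biprod.inr : Z ⟶ Z ⊞ Z).op).app A γ = 0 → γ = 0 := by
      intro γ h1 h2
      refine pull_jointly_inj σ (ι := Bool) (D := fun _ => Z)
        (fun i => bif i then biprod.inl else biprod.inr)
        (fun i => bif i then biprod.fst else biprod.snd) ?_ γ ?_
      · rw [Fintype.sum_bool]
        simpa using biprod.total
      · intro i
        cases i
        · simpa using h2
        · simpa using h1
    have hsub := hkey (β - ((σ.E.map (biprod.fst : Z ⊞ Z ⟶ Z).op).app A θ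
        + (σ.E.map (biprod.snd : Z ⊞ Z ⟶ Z).op).app A θ)) ?_ ?_
    · have := sub_eq_zero.mp hsub
      exact this
    · rw [map_sub, map_add, hβ, pull_pull, pull_pull, pull_pull,
        biprod.inl_desc, biprod.inl_fst, biprod.inl_snd, pull_id, pull_zero_mor]
      simp
    · rw [map_sub, map_add, hβ, pull_pull, pull_pull, pull_pull,
        biprod.inr_desc, biprod.inr_fst, biprod.inr_snd, pull_id, pull_zero_mor]
      simp
  have hab : a + b = biprod.lift a b ≫ biprod.desc (𝟙 Z) (𝟙 Z) := by
    simp [biprod.lift_desc]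
  rw [hab, ← pull_pull, ← hβ, hdec, map_add, pull_pull, pull_pull,
    biprod.lift_fst, biprod.lift_snd]

lemma inAdd_of_retract {T X Y : C} (hY : InAdd T Y) (s : X ⟶ Y) (r : Y ⟶ X)
    (h : s ≫ r = 𝟙 X) : InAdd T X := by
  obtain ⟨n, s0, r0, hs0⟩ := hY
  refine ⟨n, s ≫ s0, r0 ≫ r, ?_⟩
  rw [Category.assoc, ← Category.assoc s0 r0 r, hs0, Category.id_comp, h]

/-- If `E(X,T) = 0` then `E(X,M) = 0` for every `M ∈ Add T`. -/
lemma E_vanish_addT_coeff (σ : Extriangulated k C) {X T M : C}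
    (hX : ∀ α : (σ.E.obj (op X)).obj T, α = 0) (hM : InAdd T M)
    (β : (σ.E.obj (op X)).obj M) : β = 0 := by
  obtain ⟨m, s, r, hsr⟩ := hM
  refine push_jointly_inj σ (ι := Fin m)
    (fun i => s ≫ biproduct.π (fun _ : Fin m => T) i)
    (fun i => biproduct.ι (fun _ : Fin m => T) i ≫ r) ?_ β (fun i => hX _)
  have hstep : ∑ i, (s ≫ biproduct.π (fun _ : Fin m => T) i)
        ≫ (biproduct.ι (fun _ : Fin m => T) i ≫ r)
      = s ≫ (∑ i, (biproduct.π (fun _ : Fin m => T) i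
          ≫ biproduct.ι (fun _ : Fin m => T) i)) ≫ r := by
    rw [Preadditive.sum_comp, Preadditive.comp_sum]
    apply Finset.sum_congr rfl
    intro i _
    simp [Category.assoc]
  rw [hstep, biproduct.total, Category.id_comp, hsr]

/-- If `T` is rigid then `E(M,T) = 0` for every `M ∈ Add T`. -/
lemma E_vanish_addT_base (σ : Extriangulated k C) {T M : C}
    (hrig : ∀ α : (σ.E.obj (op T)).obj T, α = 0) (hM : InAdd T M)
    (β : (σ.E.obj (op M)).obj T) : β = 0 := by
  obtain ⟨m, s, r, hsr⟩ := hM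
  refine pull_jointly_inj σ (ι := Fin m)
    (fun i => biproduct.ι (fun _ : Fin m => T) i ≫ r)
    (fun i => s ≫ biproduct.π (fun _ : Fin m => T) i) ?_ β (fun i => hrig _)
  have hstep : ∑ i, (s ≫ biproduct.π (fun _ : Fin m => T) i)
        ≫ (biproduct.ι (fun _ : Fin m => T) i ≫ r)
      = s ≫ (∑ i, (biproduct.π (fun _ : Fin m => T) i
          ≫ biproduct.ι (fun _ : Fin m => T) i)) ≫ r := by
    rw [Preadditive.sum_comp, Preadditive.comp_sum]
    apply Finset.sum_congr rfl
    intro i _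
    simp [Category.assoc]
  rw [hstep, biproduct.total, Category.id_comp, hsr]

end Stmt7

namespace Stmt7

theorem cluster_tilting_characterization
    {C : Type u} [Category.{v} C] [Preadditive C] [CategoryTheory.Linear k C]
    [HasFiniteBiproducts C]
    [∀ X Y : C, FiniteDimensional k (X ⟶ Y)]
    (σ : Extriangulated k C) (hFrob : σ.Frobenius)
    (T : C) (hbasic : Basic T) (hrigid : σ.Rigid T) :
    (∀ X : C, ∃ (T₁ T₀ : C) (f : T₁ ⟶ T₀) (g : T₀ ⟶ X),
        σ.Conflation f g ∧ InAdd T T₁ ∧ InAdd T T₀)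
    ↔ (∀ X : C, (∀ α : (σ.E.obj (op X)).obj T, α = 0) → InAdd T X) := by
  constructor
  · -- cluster tilting ⇒ Ext-vanishing characterizes Add T
    intro hCT X hX
    obtain ⟨T₁, T₀, f, g, ⟨α, hα⟩, h₁, h₀⟩ := hCT X
    have hα0 : α = 0 := E_vanish_addT_coeff σ hX h₁ α
    rw [hα0] at hα
    obtain ⟨-, t, ht⟩ := σ.realizes_zero f g hα
    exact inAdd_of_retract h₀ t g ht
  · -- Ext-vanishing characterizes Add T ⇒ cluster tilting
    intro H X
    obtain ⟨K, P, f, g, ⟨α, hα⟩, hP⟩ := hFrob.1 X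
    set n := Module.finrank k (K ⟶ T) with hn
    let b : Module.Basis (Fin n) k (K ⟶ T) := Module.finBasis k (K ⟶ T)
    set T' : C := ⨁ (fun _ : Fin n => T) with hT'
    let l : K ⟶ T' := biproduct.lift (fun i => b i)
    set α' := (σ.E.obj (op X)).map l α with hα'def
    obtain ⟨B, f', g', hα'⟩ := σ.realize_exists α'
    have hT'add : InAdd T T' := ⟨n, 𝟙 _, 𝟙 _, Category.id_comp _⟩
    refine ⟨T', B, f', g', ⟨α', hα'⟩, hT'add, ?_⟩
    apply H
    intro η
    obtain ⟨I, Ω, i, p, ⟨θ, hθ⟩, hI⟩ := hFrob.2.1 T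
    -- every class in E(B,T) is pulled back from θ
    obtain ⟨h, hh⟩ := σ.ex₃ θ i p hθ η (hI B _)
    -- restriction of η to T' vanishes
    have hpull : (σ.E.map (f' ≫ h).op).app T θ = 0 := by
      rw [← pull_pull, hh]
      exact E_vanish_addT_base σ hrigid hT'add _
    obtain ⟨m₀, hm₀⟩ := σ.ex₂ θ i p hθ (f' ≫ h) hpull
    obtain ⟨mt, hmt⟩ := σ.ex₅ α' f' g' hα' m₀ (hI X _)
    have hfac : f' ≫ (h - mt ≫ p) = 0 := by
      rw [Preadditive.comp_sub, ← Category.assoc, hmt, hm₀, sub_self]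
    obtain ⟨e, he⟩ := σ.ex₄ α' f' g' hα' (h - mt ≫ p) hfac
    have hdecomp : h = mt ≫ p + g' ≫ e := by
      rw [he]; abel
    -- the first summand kills θ
    have h1 : (σ.E.map (mt ≫ p).op).app T θ = 0 := by
      have hp : (σ.E.map p.op).app T θ = 0 := by
        have h2 := σ.ex₂' θ i p hθ (𝟙 I)
        rwa [Category.id_comp] at h2
      rw [← pull_pull, hp]
      exact map_zero _
    set ξ := (σ.E.map e.op).app T θ with hξdef
    have hξ0 : (σ.E.map g.op).app T ξ = 0 := hP T _
    obtain ⟨h₀, hh₀⟩ := σ.ex₆ α f g hα ξ hξ0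
    -- approximation property of l
    obtain ⟨h'', hl⟩ : ∃ h'' : T' ⟶ T, l ≫ h'' = h₀ := by
      refine ⟨∑ i2, b.repr h₀ i2 • biproduct.π (fun _ : Fin n => T) i2, ?_⟩
      rw [Preadditive.comp_sum]
      simp_rw [Linear.comp_smul]
      have : ∀ i2, l ≫ biproduct.π (fun _ : Fin n => T) i2 = b i2 := by
        intro i2; simp [l]
      simp_rw [this]
      exact b.sum_repr h₀
    have hηcalc : η = (σ.E.map g'.op).app T ((σ.E.obj (op X)).map h'' α') := by
      calc η = (σ.E.map h.op).app T θ := hh.symm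
        _ = (σ.E.map (mt ≫ p + g' ≫ e).op).app T θ := by rw [← hdecomp]
        _ = (σ.E.map (mt ≫ p).op).app T θ + (σ.E.map (g' ≫ e).op).app T θ :=
            pull_add σ _ _ θ
        _ = (σ.E.map (g' ≫ e).op).app T θ := by rw [h1, zero_add]
        _ = (σ.E.map g'.op).app T ξ := by rw [← pull_pull, hξdef]
        _ = (σ.E.map g'.op).app T ((σ.E.obj (op X)).map h₀ α) := by rw [hh₀]
        _ = (σ.E.map g'.op).app T ((σ.E.obj (op X)).map (l ≫ h'') α) := by rw [hl]
        _ = (σ.E.map g'.op).app T ((σ.E.obj (op X)).map h'' α') := by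
            rw [← push_push, hα'def]
    rw [hηcalc, pull_push_comm]
    have hα'0 : (σ.E.map g'.op).app T' α' = 0 := by
      have h2 := σ.ex₂' α' f' g' hα' (𝟙 B)
      rwa [Category.id_comp] at h2
    rw [hα'0]
    exact map_zero _

end Stmt7
end

section
/- Let τ : (C, E, s) → (C', E', s') be an extriangulated functor between extriangulated categories such that C is Frobenius with finite-dimensional Hom-spaces and extriangulated 2-Calabi–Yau. Suppose there are cluster tilting objects T ∈ C and T' ∈ C' with τ(T) = T', that τ induces an isomorphism Hom_C(T,T) → Hom_{C'}(T',T'), and that τ is essentially surjective. Then τ is an equivalence of extriangulated categories; in particular τ is fully faithful on Hom-spaces and induces isomorphisms E(X,Y) → E'(τX, τY) for all X, Y. -/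
set_option linter.unusedSectionVars false


/-!
STATEMENT 9: Let τ : (C, E, s) → (C', E', s') be an extriangulated functor between
extriangulated categories such that C is Frobenius with finite-dimensional
Hom-spaces and extriangulated 2-Calabi–Yau.  Suppose there are cluster tilting
objects T ∈ C and T' ∈ C' with τ(T) ≅ T', that τ induces an isomorphism
Hom_C(T,T) → Hom_{C'}(T',T'), and that τ is essentially surjective.  Then τ is an
equivalence of extriangulated categories: it is fully faithful and induces
isomorphisms E(X,Y) → E'(τX, τY) for all X, Y.
-/

open CategoryTheory Limits Opposite

universe v u w

variable (k : Type) [Field k]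

/-- `T` is a cluster tilting object. -/
def ClusterTilting {C : Type u} [Category.{v} C] [Preadditive C]
    [CategoryTheory.Linear k C] [HasFiniteBiproducts C]
    (σ : Extriangulated k C) (T : C) : Prop :=
  Basic T ∧ σ.Rigid T ∧
    ∀ X : C, ∃ (T₁ T₀ : C) (f : T₁ ⟶ T₀) (g : T₀ ⟶ X),
      σ.Conflation f g ∧ InAdd T T₁ ∧ InAdd T T₀


section Aux

variable {k : Type} [Field k] {D : Type u} [Category.{v} D] [Preadditive D]
  [CategoryTheory.Linear k D] [HasFiniteBiproducts D] (σ : Extriangulated k D)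

attribute [local instance] hasBinaryBiproducts_of_finite_biproducts

open ZeroObject

/-- Covariant functoriality, applied form. -/
lemma Eo_comp {W : Dᵒᵖ} {A B C₀ : D} (f : A ⟶ B) (g : B ⟶ C₀) (γ : (σ.E.obj W).obj A) :
    ((σ.E.obj W).map (f ≫ g)) γ = ((σ.E.obj W).map g) (((σ.E.obj W).map f) γ) := by
  rw [Functor.map_comp]; rfl

lemma Eo_id {W : Dᵒᵖ} {A : D} (γ : (σ.E.obj W).obj A) :
    ((σ.E.obj W).map (𝟙 A)) γ = γ := by
  rw [(σ.E.obj W).map_id]; rfl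

/-- Contravariant functoriality, applied form. -/
lemma Em_comp {A B C₀ M : D} (f : A ⟶ B) (g : B ⟶ C₀) (γ : (σ.E.obj (op C₀)).obj M) :
    ((σ.E.map (f ≫ g).op).app M) γ
      = ((σ.E.map f.op).app M) (((σ.E.map g.op).app M) γ) := by
  rw [op_comp, Functor.map_comp]; rfl

lemma Em_id {Z M : D} (γ : (σ.E.obj (op Z)).obj M) :
    ((σ.E.map (𝟙 Z).op).app M) γ = γ := by
  rw [op_id, σ.E.map_id]; rfl

/-- Bifunctor naturality, applied form. -/
lemma E_nat {X Y A B : D} (d : X ⟶ Y) (u : A ⟶ B) (γ : (σ.E.obj (op Y)).obj A) :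
    ((σ.E.obj (op X)).map u) (((σ.E.map d.op).app A) γ)
      = ((σ.E.map d.op).app B) (((σ.E.obj (op Y)).map u) γ) := by
  have h := (σ.E.map d.op).naturality u
  have := DFunLike.congr_fun (congrArg ModuleCat.Hom.hom h) γ
  exact this.symm

lemma vanish_tgt {W O : D} (hO : IsZero O) (γ : (σ.E.obj (op W)).obj O) : γ = 0 := by
  obtain ⟨B, f, g, hr⟩ := σ.realize_exists γ
  exact σ.split_zero γ f g hr ⟨0, hO.eq_of_tgt _ _⟩

lemma vanish_src {O A : D} (hO : IsZero O) (γ : (σ.E.obj (op O)).obj A) : γ = 0 := by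
  obtain ⟨B, f, g, hr⟩ := σ.realize_exists γ
  have h0 : ((0 : O ⟶ B) ≫ g) = 𝟙 O := hO.eq_of_src _ _
  have h := σ.ex₂' γ f g hr (0 : O ⟶ B)
  rw [h0] at h
  rw [← Em_id σ γ, h]

lemma map_zero_cov {W A B : D} (γ : (σ.E.obj (op W)).obj A) :
    ((σ.E.obj (op W)).map (0 : A ⟶ B)) γ = 0 := by
  have h : (0 : A ⟶ B) = (0 : A ⟶ (0 : D)) ≫ (0 : (0 : D) ⟶ B) := by simp
  rw [h, Eo_comp σ, vanish_tgt σ (isZero_zero D) (((σ.E.obj (op W)).map (0 : A ⟶ (0 : D))) γ), map_zero]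

lemma map_zero_con {A B M : D} (γ : (σ.E.obj (op B)).obj M) :
    ((σ.E.map (0 : A ⟶ B).op).app M) γ = 0 := by
  have h : (0 : A ⟶ B) = (0 : A ⟶ (0 : D)) ≫ (0 : (0 : D) ⟶ B) := by simp
  rw [h, Em_comp σ, vanish_src σ (isZero_zero D) (((σ.E.map (0 : (0 : D) ⟶ B).op).app M) γ), map_zero]

lemma cov_pair_inj {W P Q : D} (δ : (σ.E.obj (op W)).obj (P ⊞ Q))
    (h1 : ((σ.E.obj (op W)).map biprod.fst) δ = 0)
    (h2 : ((σ.E.obj (op W)).map biprod.snd) δ = 0) : δ = 0 := by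
  obtain ⟨B, u, v, hr⟩ := σ.realize_exists δ
  obtain ⟨r₁, hr₁⟩ := σ.ex₅ δ u v hr biprod.fst h1
  obtain ⟨r₂, hr₂⟩ := σ.ex₅ δ u v hr biprod.snd h2
  refine σ.split_zero δ u v hr ⟨r₁ ≫ biprod.inl + r₂ ≫ biprod.inr, ?_⟩
  rw [Preadditive.comp_add, ← Category.assoc, ← Category.assoc, hr₁, hr₂, biprod.total]

lemma map_add_cov {W A B : D} (a b : A ⟶ B) (γ : (σ.E.obj (op W)).obj A) :
    ((σ.E.obj (op W)).map (a + b)) γ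
      = ((σ.E.obj (op W)).map a) γ + ((σ.E.obj (op W)).map b) γ := by
  have c1 : ((σ.E.obj (op W)).map (biprod.fst : B ⊞ B ⟶ B))
      (((σ.E.obj (op W)).map (biprod.lift a b)) γ) = ((σ.E.obj (op W)).map a) γ := by
    rw [← Eo_comp σ, biprod.lift_fst]
  have c2 : ((σ.E.obj (op W)).map (biprod.fst : B ⊞ B ⟶ B))
      (((σ.E.obj (op W)).map (biprod.inl : B ⟶ B ⊞ B)) (((σ.E.obj (op W)).map a) γ))
      = ((σ.E.obj (op W)).map a) γ := by
    rw [← Eo_comp σ, biprod.inl_fst, Eo_id σ]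
  have c3 : ((σ.E.obj (op W)).map (biprod.fst : B ⊞ B ⟶ B))
      (((σ.E.obj (op W)).map (biprod.inr : B ⟶ B ⊞ B)) (((σ.E.obj (op W)).map b) γ))
      = 0 := by
    rw [← Eo_comp σ, biprod.inr_fst, map_zero_cov σ]
  have c4 : ((σ.E.obj (op W)).map (biprod.snd : B ⊞ B ⟶ B))
      (((σ.E.obj (op W)).map (biprod.lift a b)) γ) = ((σ.E.obj (op W)).map b) γ := by
    rw [← Eo_comp σ, biprod.lift_snd]
  have c5 : ((σ.E.obj (op W)).map (biprod.snd : B ⊞ B ⟶ B))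
      (((σ.E.obj (op W)).map (biprod.inl : B ⟶ B ⊞ B)) (((σ.E.obj (op W)).map a) γ))
      = 0 := by
    rw [← Eo_comp σ, biprod.inl_snd, map_zero_cov σ]
  have c6 : ((σ.E.obj (op W)).map (biprod.snd : B ⊞ B ⟶ B))
      (((σ.E.obj (op W)).map (biprod.inr : B ⟶ B ⊞ B)) (((σ.E.obj (op W)).map b) γ))
      = ((σ.E.obj (op W)).map b) γ := by
    rw [← Eo_comp σ, biprod.inr_snd, Eo_id σ]
  have key : ((σ.E.obj (op W)).map (biprod.lift a b)) γ
      = ((σ.E.obj (op W)).map (biprod.inl : B ⟶ B ⊞ B)) (((σ.E.obj (op W)).map a) γ)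
        + ((σ.E.obj (op W)).map (biprod.inr : B ⟶ B ⊞ B)) (((σ.E.obj (op W)).map b) γ) := by
    rw [← sub_eq_zero]
    apply cov_pair_inj σ
    · rw [map_sub, map_add, c1, c2, c3, add_zero, sub_self]
    · rw [map_sub, map_add, c4, c5, c6, zero_add, sub_self]
  have hd : a + b = biprod.lift a b ≫ biprod.desc (𝟙 B) (𝟙 B) := by
    rw [biprod.lift_desc, Category.comp_id, Category.comp_id]
  have d1 : ((σ.E.obj (op W)).map (biprod.desc (𝟙 B) (𝟙 B)))
      (((σ.E.obj (op W)).map (biprod.inl : B ⟶ B ⊞ B)) (((σ.E.obj (op W)).map a) γ))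
      = ((σ.E.obj (op W)).map a) γ := by
    rw [← Eo_comp σ, biprod.inl_desc, Eo_id σ]
  have d2 : ((σ.E.obj (op W)).map (biprod.desc (𝟙 B) (𝟙 B)))
      (((σ.E.obj (op W)).map (biprod.inr : B ⟶ B ⊞ B)) (((σ.E.obj (op W)).map b) γ))
      = ((σ.E.obj (op W)).map b) γ := by
    rw [← Eo_comp σ, biprod.inr_desc, Eo_id σ]
  rw [hd, Eo_comp σ, key, map_add, d1, d2]

lemma map_sub_cov {W A B : D} (a b : A ⟶ B) (γ : (σ.E.obj (op W)).obj A) :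
    ((σ.E.obj (op W)).map (a - b)) γ
      = ((σ.E.obj (op W)).map a) γ - ((σ.E.obj (op W)).map b) γ := by
  have h := map_add_cov σ (a - b) b γ
  rw [sub_add_cancel] at h
  exact eq_sub_of_add_eq h.symm

lemma con_pair_inj {P Q M : D} (δ : (σ.E.obj (op (P ⊞ Q))).obj M)
    (h1 : ((σ.E.map (biprod.inl : P ⟶ P ⊞ Q).op).app M) δ = 0)
    (h2 : ((σ.E.map (biprod.inr : Q ⟶ P ⊞ Q).op).app M) δ = 0) : δ = 0 := by
  obtain ⟨B, u, v, hr⟩ := σ.realize_exists δ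
  obtain ⟨k₁, hk₁⟩ := σ.ex₂ δ u v hr biprod.inl h1
  obtain ⟨k₂, hk₂⟩ := σ.ex₂ δ u v hr biprod.inr h2
  have hs : (biprod.fst ≫ k₁ + biprod.snd ≫ k₂) ≫ v = 𝟙 (P ⊞ Q) := by
    rw [Preadditive.add_comp, Category.assoc, Category.assoc, hk₁, hk₂, biprod.total]
  have h := σ.ex₂' δ u v hr (biprod.fst ≫ k₁ + biprod.snd ≫ k₂)
  rw [hs] at h
  rw [← Em_id σ δ, h]

lemma map_add_con {A B M : D} (a b : A ⟶ B) (γ : (σ.E.obj (op B)).obj M) :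
    ((σ.E.map (a + b).op).app M) γ
      = ((σ.E.map a.op).app M) γ + ((σ.E.map b.op).app M) γ := by
  have c1 : ((σ.E.map (biprod.inl : A ⟶ A ⊞ A).op).app M)
      (((σ.E.map (biprod.desc a b).op).app M) γ) = ((σ.E.map a.op).app M) γ := by
    rw [← Em_comp σ, biprod.inl_desc]
  have c2 : ((σ.E.map (biprod.inl : A ⟶ A ⊞ A).op).app M)
      (((σ.E.map (biprod.fst : A ⊞ A ⟶ A).op).app M) (((σ.E.map a.op).app M) γ))
      = ((σ.E.map a.op).app M) γ := by
    rw [← Em_comp σ, biprod.inl_fst, Em_id σ]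
  have c3 : ((σ.E.map (biprod.inl : A ⟶ A ⊞ A).op).app M)
      (((σ.E.map (biprod.snd : A ⊞ A ⟶ A).op).app M) (((σ.E.map b.op).app M) γ))
      = 0 := by
    rw [← Em_comp σ, biprod.inl_snd, map_zero_con σ]
  have c4 : ((σ.E.map (biprod.inr : A ⟶ A ⊞ A).op).app M)
      (((σ.E.map (biprod.desc a b).op).app M) γ) = ((σ.E.map b.op).app M) γ := by
    rw [← Em_comp σ, biprod.inr_desc]
  have c5 : ((σ.E.map (biprod.inr : A ⟶ A ⊞ A).op).app M)
      (((σ.E.map (biprod.fst : A ⊞ A ⟶ A).op).app M) (((σ.E.map a.op).app M) γ))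
      = 0 := by
    rw [← Em_comp σ, biprod.inr_fst, map_zero_con σ]
  have c6 : ((σ.E.map (biprod.inr : A ⟶ A ⊞ A).op).app M)
      (((σ.E.map (biprod.snd : A ⊞ A ⟶ A).op).app M) (((σ.E.map b.op).app M) γ))
      = ((σ.E.map b.op).app M) γ := by
    rw [← Em_comp σ, biprod.inr_snd, Em_id σ]
  have key : ((σ.E.map (biprod.desc a b).op).app M) γ
      = ((σ.E.map (biprod.fst : A ⊞ A ⟶ A).op).app M) (((σ.E.map a.op).app M) γ)
        + ((σ.E.map (biprod.snd : A ⊞ A ⟶ A).op).app M) (((σ.E.map b.op).app M) γ) := by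
    rw [← sub_eq_zero]
    apply con_pair_inj σ
    · rw [map_sub, map_add, c1, c2, c3, add_zero, sub_self]
    · rw [map_sub, map_add, c4, c5, c6, zero_add, sub_self]
  have hd : a + b = biprod.lift (𝟙 A) (𝟙 A) ≫ biprod.desc a b := by
    rw [biprod.lift_desc, Category.id_comp, Category.id_comp]
  have d1 : ((σ.E.map (biprod.lift (𝟙 A) (𝟙 A)).op).app M)
      (((σ.E.map (biprod.fst : A ⊞ A ⟶ A).op).app M) (((σ.E.map a.op).app M) γ))
      = ((σ.E.map a.op).app M) γ := by
    rw [← Em_comp σ, biprod.lift_fst, Em_id σ]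
  have d2 : ((σ.E.map (biprod.lift (𝟙 A) (𝟙 A)).op).app M)
      (((σ.E.map (biprod.snd : A ⊞ A ⟶ A).op).app M) (((σ.E.map b.op).app M) γ))
      = ((σ.E.map b.op).app M) γ := by
    rw [← Em_comp σ, biprod.lift_snd, Em_id σ]
  rw [hd, Em_comp σ, key, map_add, d1, d2]

lemma map_sub_con {A B M : D} (a b : A ⟶ B) (γ : (σ.E.obj (op B)).obj M) :
    ((σ.E.map (a - b).op).app M) γ
      = ((σ.E.map a.op).app M) γ - ((σ.E.map b.op).app M) γ := by
  have h := map_add_con σ (a - b) b γ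
  rw [sub_add_cancel] at h
  exact eq_sub_of_add_eq h.symm

end Aux

section InAddLemmas

variable {D : Type u} [Category.{v} D] [Preadditive D] [HasFiniteBiproducts D]

lemma inAdd_pieces {T M : D} (h : InAdd T M) :
    ∃ (n : ℕ) (p : Fin n → (M ⟶ T)) (j : Fin n → (T ⟶ M)),
      (∑ i, p i ≫ j i) = 𝟙 M := by
  obtain ⟨n, s, r, hsr⟩ := h
  refine ⟨n, fun i => s ≫ biproduct.π (fun _ : Fin n => T) i,
    fun i => biproduct.ι (fun _ : Fin n => T) i ≫ r, ?_⟩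
  have h1 : ∀ i : Fin n, (s ≫ biproduct.π (fun _ : Fin n => T) i) ≫ (biproduct.ι (fun _ : Fin n => T) i ≫ r)
      = s ≫ ((biproduct.π (fun _ : Fin n => T) i ≫ biproduct.ι (fun _ : Fin n => T) i) ≫ r) := by
    intro i; simp only [Category.assoc]
  rw [Finset.sum_congr rfl (fun i _ => h1 i), ← Preadditive.comp_sum, ← Preadditive.sum_comp,
    biproduct.total, Category.id_comp, hsr]

lemma inAdd_self (T : D) : InAdd T T :=
  ⟨1, biproduct.lift (fun _ => 𝟙 T), biproduct.π _ 0, by rw [biproduct.lift_π]⟩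

lemma inAdd_retract {T X M : D} (h : InAdd T M) (s : X ⟶ M) (r : M ⟶ X)
    (hsr : s ≫ r = 𝟙 X) : InAdd T X := by
  obtain ⟨n, s', r', h'⟩ := h
  refine ⟨n, s ≫ s', r' ≫ r, ?_⟩
  rw [Category.assoc, ← Category.assoc s' r' r, h', Category.id_comp, hsr]

lemma inAdd_map {D' : Type u} [Category.{v} D'] [Preadditive D'] [HasFiniteBiproducts D']
    (τ : D ⥤ D') [τ.Additive] {T : D} {T' : D'} (e : τ.obj T ≅ T') {X : D}
    (h : InAdd T X) : InAdd T' (τ.obj X) := by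
  obtain ⟨n, s, r, hsr⟩ := h
  let φ : τ.obj (⨁ fun _ : Fin n => T) ≅ ⨁ (fun _ : Fin n => T') :=
    (τ.mapBiproduct _) ≪≫ biproduct.mapIso (fun _ => e)
  refine ⟨n, τ.map s ≫ φ.hom, φ.inv ≫ τ.map r, ?_⟩
  rw [Category.assoc, Iso.hom_inv_id_assoc, ← τ.map_comp, hsr, τ.map_id]

end InAddLemmas

section Vanishing

variable {k : Type} [Field k] {D : Type u} [Category.{v} D] [Preadditive D]
  [CategoryTheory.Linear k D] [HasFiniteBiproducts D] (σ : Extriangulated k D)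

lemma vcov {T X M : D} (hT : ∀ γ : (σ.E.obj (op X)).obj T, γ = 0) (hM : InAdd T M) :
    ∀ δ : (σ.E.obj (op X)).obj M, δ = 0 := by
  obtain ⟨n, p, j, htot⟩ := inAdd_pieces hM
  intro δ
  obtain ⟨B, u, v, hr⟩ := σ.realize_exists δ
  have hre : ∀ i, ∃ ri : B ⟶ T, u ≫ ri = p i := fun i => σ.ex₅ δ u v hr (p i) (hT _)
  choose rr hrr using hre
  refine σ.split_zero δ u v hr ⟨∑ i, rr i ≫ j i, ?_⟩
  rw [Preadditive.comp_sum]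
  have h1 : ∀ i : Fin n, u ≫ rr i ≫ j i = p i ≫ j i := by
    intro i; rw [← Category.assoc, hrr]
  rw [Finset.sum_congr rfl (fun i _ => h1 i), htot]

lemma vcon {T X M : D} (hT : ∀ γ : (σ.E.obj (op T)).obj X, γ = 0) (hM : InAdd T M) :
    ∀ δ : (σ.E.obj (op M)).obj X, δ = 0 := by
  obtain ⟨n, p, j, htot⟩ := inAdd_pieces hM
  intro δ
  obtain ⟨B, u, v, hr⟩ := σ.realize_exists δ
  have hre : ∀ i, ∃ hi : T ⟶ B, hi ≫ v = j i := fun i => σ.ex₂ δ u v hr (j i) (hT _)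
  choose hh hhh using hre
  have hs : (∑ i, p i ≫ hh i) ≫ v = 𝟙 M := by
    rw [Preadditive.sum_comp]
    have h1 : ∀ i : Fin n, (p i ≫ hh i) ≫ v = p i ≫ j i := by
      intro i; rw [Category.assoc, hhh]
    rw [Finset.sum_congr rfl (fun i _ => h1 i), htot]
  have h := σ.ex₂' δ u v hr (∑ i, p i ≫ hh i)
  rw [hs] at h
  rw [← Em_id σ δ, h]

lemma add_vanish {T P Q : D} (hR : σ.Rigid T) (hP : InAdd T P) (hQ : InAdd T Q) :
    ∀ δ : (σ.E.obj (op P)).obj Q, δ = 0 :=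
  vcon σ (fun γ => vcov σ hR hQ γ) hP

end Vanishing

section Step1

variable {D : Type u} [Category.{v} D] [Preadditive D] [HasFiniteBiproducts D]
  {D' : Type u} [Category.{v} D'] [Preadditive D'] [HasFiniteBiproducts D']

lemma step1 (τ : D ⥤ D') [τ.Additive] {T : D}
    (hbijT : Function.Bijective (fun f : T ⟶ T => τ.map f)) :
    ∀ {P Q : D}, InAdd T P → InAdd T Q →
      Function.Bijective (fun f : P ⟶ Q => τ.map f) := by
  -- abbreviation for the biproduct comparison iso
  let φ : ∀ n : ℕ, τ.obj (⨁ fun _ : Fin n => T) ≅ ⨁ (fun _ : Fin n => τ.obj T) :=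
    fun n => τ.mapBiproduct _
  have hφinv : ∀ (n : ℕ) (i : Fin n),
      biproduct.ι (fun _ : Fin n => τ.obj T) i ≫ (φ n).inv
        = τ.map (biproduct.ι (fun _ : Fin n => T) i) := by
    intro n i
    rw [show (φ n).inv = (τ.mapBiproduct (fun _ : Fin n => T)).inv from rfl,
      Functor.mapBiproduct_inv, biproduct.ι_desc]
  have hφhom : ∀ (n : ℕ) (j : Fin n),
      (φ n).hom ≫ biproduct.π (fun _ : Fin n => τ.obj T) j
        = τ.map (biproduct.π (fun _ : Fin n => T) j) := by
    intro n j
    rw [show (φ n).hom = (τ.mapBiproduct (fun _ : Fin n => T)).hom from rfl,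
      Functor.mapBiproduct_hom, biproduct.lift_π]
  -- Stage a : maps  ⊕ᵐT ⟶ T
  have inj_a : ∀ (m : ℕ) (u v : (⨁ fun _ : Fin m => T) ⟶ T),
      τ.map u = τ.map v → u = v := by
    intro m u v huv
    apply biproduct.hom_ext'
    intro i
    apply hbijT.injective
    show τ.map _ = τ.map _
    rw [τ.map_comp, τ.map_comp, huv]
  have surj_a : ∀ (m : ℕ) (w : τ.obj (⨁ fun _ : Fin m => T) ⟶ τ.obj T),
      ∃ u, τ.map u = w := by
    intro m w
    have hb : ∀ i : Fin m, ∃ bi : T ⟶ T,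
        τ.map bi = biproduct.ι (fun _ : Fin m => τ.obj T) i ≫ (φ m).inv ≫ w :=
      fun i => hbijT.surjective _
    choose b hbb using hb
    refine ⟨biproduct.desc b, ?_⟩
    have : (φ m).inv ≫ τ.map (biproduct.desc b) = (φ m).inv ≫ w := by
      apply biproduct.hom_ext'
      intro i
      rw [← Category.assoc, ← Category.assoc, hφinv, ← τ.map_comp, biproduct.ι_desc,
        hbb, ← Category.assoc, hφinv]
    exact (cancel_epi (φ m).inv).mp this
  -- Stage b : maps ⊕ᵐT ⟶ ⊕ⁿT
  have inj_b : ∀ (m n : ℕ) (u v : (⨁ fun _ : Fin m => T) ⟶ (⨁ fun _ : Fin n => T)),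
      τ.map u = τ.map v → u = v := by
    intro m n u v huv
    apply biproduct.hom_ext
    intro j
    apply inj_a m
    rw [τ.map_comp, τ.map_comp, huv]
  have surj_b : ∀ (m n : ℕ)
      (w : τ.obj (⨁ fun _ : Fin m => T) ⟶ τ.obj (⨁ fun _ : Fin n => T)),
      ∃ u, τ.map u = w := by
    intro m n w
    have hc : ∀ j : Fin n, ∃ cj : (⨁ fun _ : Fin m => T) ⟶ T,
        τ.map cj = w ≫ (φ n).hom ≫ biproduct.π _ j := fun j => surj_a m _
    choose c hcc using hc
    refine ⟨biproduct.lift c, ?_⟩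
    have : τ.map (biproduct.lift c) ≫ (φ n).hom = w ≫ (φ n).hom := by
      apply biproduct.hom_ext
      intro j
      rw [Category.assoc, hφhom, ← τ.map_comp, biproduct.lift_π, hcc, Category.assoc]
    exact (cancel_mono (φ n).hom).mp this
  -- Stage c : retracts
  intro P Q hP hQ
  obtain ⟨m, sP, rP, hPr⟩ := hP
  obtain ⟨n, sQ, rQ, hQr⟩ := hQ
  constructor
  · intro u v huv
    have h1 : τ.map (rP ≫ u ≫ sQ) = τ.map (rP ≫ v ≫ sQ) := by
      rw [τ.map_comp, τ.map_comp, τ.map_comp, τ.map_comp]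
      show _ ≫ τ.map u ≫ _ = _ ≫ τ.map v ≫ _
      rw [show τ.map u = τ.map v from huv]
    have h2 := inj_b m n _ _ h1
    have h3 : sP ≫ (rP ≫ u ≫ sQ) ≫ rQ = sP ≫ (rP ≫ v ≫ sQ) ≫ rQ := by rw [h2]
    simpa only [Category.assoc, ← Category.assoc sP rP, hPr, Category.id_comp,
      ← Category.assoc _ sQ rQ, hQr, Category.comp_id] using h3
  · intro w
    obtain ⟨v₀, hv₀⟩ := surj_b m n (τ.map rP ≫ w ≫ τ.map sQ)
    refine ⟨sP ≫ v₀ ≫ rQ, ?_⟩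
    show τ.map _ = w
    rw [τ.map_comp, τ.map_comp, hv₀]
    calc τ.map sP ≫ (τ.map rP ≫ w ≫ τ.map sQ) ≫ τ.map rQ
        = (τ.map sP ≫ τ.map rP) ≫ w ≫ (τ.map sQ ≫ τ.map rQ) := by
          simp only [Category.assoc]
      _ = (τ.map (sP ≫ rP)) ≫ w ≫ (τ.map (sQ ≫ rQ)) := by
          rw [τ.map_comp, τ.map_comp]
      _ = w := by
          rw [hPr, hQr, τ.map_id, τ.map_id, Category.id_comp, Category.comp_id]

end Step1


namespace Stmt9

theorem extriangulated_equivalence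
    {C : Type u} [Category.{v} C] [Preadditive C] [CategoryTheory.Linear k C]
    [HasFiniteBiproducts C]
    {C' : Type u} [Category.{v} C'] [Preadditive C'] [CategoryTheory.Linear k C']
    [HasFiniteBiproducts C']
    [∀ X Y : C, FiniteDimensional k (X ⟶ Y)]
    (σ : Extriangulated k C) (σ' : Extriangulated k C')
    (τ : C ⥤ C') [τ.Additive] [τ.Linear k]
    -- the extriangulated structure of the functor τ : a natural transformation
    -- E(-,-) → E'(τ-, τ-) compatible with realizations
    (τE : ∀ X Y : C,
      ((σ.E.obj (op X)).obj Y) →ₗ[k] ((σ'.E.obj (op (τ.obj X))).obj (τ.obj Y)))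
    (τE_natl : ∀ (X X' Y : C) (f : X' ⟶ X) (α : (σ.E.obj (op X)).obj Y),
      τE X' Y (((σ.E.map f.op).app Y) α)
        = ((σ'.E.map (τ.map f).op).app (τ.obj Y)) (τE X Y α))
    (τE_natr : ∀ (X Y Y' : C) (g : Y ⟶ Y') (α : (σ.E.obj (op X)).obj Y),
      τE X Y' (((σ.E.obj (op X)).map g) α)
        = ((σ'.E.obj (op (τ.obj X))).map (τ.map g)) (τE X Y α))
    (τ_realize : ∀ {A Z B : C} (α : (σ.E.obj (op Z)).obj A) (f : A ⟶ B) (g : B ⟶ Z),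
      σ.realizes α f g → σ'.realizes (τE Z A α) (τ.map f) (τ.map g))
    -- hypotheses on C, T, T'
    (hFrob : σ.Frobenius) (hCY : σ.CY2)
    (T : C) (T' : C')
    (hT : ClusterTilting k σ T) (hT' : ClusterTilting k σ' T')
    (e : τ.obj T ≅ T')
    (hbij : Function.Bijective (fun f : T ⟶ T => e.inv ≫ τ.map f ≫ e.hom))
    (hess : ∀ Y : C', ∃ X : C, Nonempty (τ.obj X ≅ Y)) :
    τ.Full ∧ τ.Faithful ∧ ∀ X Y : C, Function.Bijective (τE X Y) := by
  classical
  obtain ⟨hEP, hEI, hPI⟩ := hFrob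
  obtain ⟨eCY, hCYl, hCYr⟩ := hCY
  obtain ⟨-, hRigid, hResol⟩ := hT
  obtain ⟨-, hRigid', hResol'⟩ := hT'
  -- τ is bijective on End(T)
  have bijT : Function.Bijective (fun f : T ⟶ T => τ.map f) := by
    let q : (τ.obj T ⟶ τ.obj T) ≃ (T' ⟶ T') :=
      { toFun := fun g => e.inv ≫ g ≫ e.hom
        invFun := fun h => e.hom ≫ h ≫ e.inv
        left_inv := by intro g; simp
        right_inv := by intro h; simp }
    have h1 : Function.Bijective (⇑q.symm ∘ (fun f : T ⟶ T => e.inv ≫ τ.map f ≫ e.hom)) :=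
      q.symm.bijective.comp hbij
    have h2 : (⇑q.symm ∘ (fun f : T ⟶ T => e.inv ≫ τ.map f ≫ e.hom))
        = fun f : T ⟶ T => τ.map f := by
      funext f
      show e.hom ≫ (e.inv ≫ τ.map f ≫ e.hom) ≫ e.inv = τ.map f
      simp
    rwa [h2] at h1
  have bij1 : ∀ {P Q : C}, InAdd T P → InAdd T Q →
      Function.Bijective (fun f : P ⟶ Q => τ.map f) := fun hP hQ => step1 τ bijT hP hQ
  -- vanishing of E on add T
  have vanC : ∀ {P Q : C}, InAdd T P → InAdd T Q →
      ∀ δ : (σ.E.obj (op P)).obj Q, δ = 0 :=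
    fun hP hQ => add_vanish σ hRigid hP hQ
  have vanC' : ∀ {P Q : C'}, InAdd T' P → InAdd T' Q →
      ∀ δ : (σ'.E.obj (op P)).obj Q, δ = 0 :=
    fun hP hQ => add_vanish σ' hRigid' hP hQ
  have addT' : ∀ {X : C}, InAdd T X → InAdd T' (τ.obj X) := fun h => inAdd_map τ e h
  -- injective objects lie in add T (uses 2-Calabi-Yau duality)
  have perp : ∀ {I : C}, σ.Injective I → InAdd T I := by
    intro I hI
    obtain ⟨T₁, T₀, f, g, ⟨α, hα⟩, h₁, h₀⟩ := hResol I
    have hα0 : α = 0 := by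
      have hd : eCY I T₁ α = 0 := by
        apply LinearMap.ext
        intro x
        rw [hI T₁ x]
        simp
      have h2 : eCY I T₁ α = eCY I T₁ 0 := by rw [hd, map_zero]
      exact (eCY I T₁).injective h2
    rw [hα0] at hα
    obtain ⟨-, s, hs⟩ := σ.realizes_zero f g hα
    exact inAdd_retract h₀ s g hs
  -- injective coresolutions with add T middle term
  have coresol : ∀ X : C, ∃ (I K : C) (i : X ⟶ I) (p : I ⟶ K)
      (ω : (σ.E.obj (op K)).obj X), σ.realizes ω i p ∧ InAdd T I ∧ σ.Projective I ∧
      σ.Injective I := by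
    intro X
    obtain ⟨I, K, i, p, ⟨ω, hω⟩, hInj⟩ := hEI X
    exact ⟨I, K, i, p, ω, hω, perp hInj, (hPI I).mpr hInj, hInj⟩
  -- τE is bijective on E(Z, Q) for Q ∈ add T
  have bijEQ : ∀ (Z Q : C), InAdd T Q → Function.Bijective (τE Z Q) := by
    intro Z Q hQ
    obtain ⟨T₁, T₀, f, g, ⟨α, hα⟩, h₁, h₀⟩ := hResol Z
    have hα' := τ_realize α f g hα
    constructor
    · intro γ₁ γ₂ hγ12
      rw [← sub_eq_zero]
      set γ := γ₁ - γ₂ with hγdef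
      have hγ0 : τE Z Q γ = 0 := by rw [hγdef, map_sub, hγ12, sub_self]
      have h2 : ((σ.E.map g.op).app Q) γ = 0 := vanC h₀ hQ _
      obtain ⟨h, hh⟩ := σ.ex₆ α f g hα γ h2
      have h3 : ((σ'.E.obj (op (τ.obj Z))).map (τ.map h)) (τE Z T₁ α) = 0 := by
        rw [← τE_natr, hh, hγ0]
      obtain ⟨w', hw'⟩ := σ'.ex₅ (τE Z T₁ α) (τ.map f) (τ.map g) hα' (τ.map h) h3
      obtain ⟨w, hw⟩ := (bij1 h₀ hQ).surjective w'
      replace hw : τ.map w = w' := hw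
      have h4 : h = f ≫ w := by
        apply (bij1 h₁ hQ).injective
        show τ.map h = τ.map (f ≫ w)
        rw [τ.map_comp, hw, hw']
      rw [← hh, h4]
      exact σ.ex₅' α f g hα w
    · intro β'
      have h2 : ((σ'.E.map (τ.map g).op).app (τ.obj Q)) β' = 0 :=
        vanC' (addT' h₀) (addT' hQ) _
      obtain ⟨h', hh'⟩ := σ'.ex₆ (τE Z T₁ α) (τ.map f) (τ.map g) hα' β' h2
      obtain ⟨h, hh⟩ := (bij1 h₁ hQ).surjective h'
      replace hh : τ.map h = h' := hh
      refine ⟨((σ.E.obj (op Z)).map h) α, ?_⟩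
      rw [τE_natr, hh, hh']
  -- τ is bijective on Hom(P, Y) for P ∈ add T
  have bijB : ∀ (P Y : C), InAdd T P →
      Function.Bijective (fun u : P ⟶ Y => τ.map u) := by
    intro P Y hP
    obtain ⟨S₁, S₀, f, g, ⟨β, hβ⟩, h₁, h₀⟩ := hResol Y
    have hβ' := τ_realize β f g hβ
    constructor
    · intro u v huv
      rw [← sub_eq_zero]
      set w0 := u - v with hw0
      have hτ : τ.map w0 = 0 := by
        rw [hw0, τ.map_sub, show τ.map u = τ.map v from huv, sub_self]
      have hobs : ((σ.E.map w0.op).app S₁) β = 0 := vanC hP h₁ _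
      obtain ⟨w, hwg⟩ := σ.ex₂ β f g hβ w0 hobs
      have h2 : τ.map w ≫ τ.map g = 0 := by rw [← τ.map_comp, hwg, hτ]
      obtain ⟨z', hz'⟩ := σ'.ex₁ (τE Y S₁ β) (τ.map f) (τ.map g) hβ' (τ.map w) h2
      obtain ⟨z, hz⟩ := (bij1 hP h₁).surjective z'
      replace hz : τ.map z = z' := hz
      have h3 : w = z ≫ f := by
        apply (bij1 hP h₀).injective
        show τ.map w = τ.map (z ≫ f)
        rw [τ.map_comp, hz, hz']
      rw [← hwg, h3, Category.assoc, σ.comp_zero β f g hβ, comp_zero]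
    · intro u'
      have hobs : ((σ'.E.map u'.op).app (τ.obj S₁)) (τE Y S₁ β) = 0 :=
        vanC' (addT' hP) (addT' h₁) _
      obtain ⟨h', hh'⟩ := σ'.ex₂ (τE Y S₁ β) (τ.map f) (τ.map g) hβ' u' hobs
      obtain ⟨w, hw⟩ := (bij1 hP h₀).surjective h'
      replace hw : τ.map w = h' := hw
      refine ⟨w ≫ g, ?_⟩
      show τ.map _ = u'
      rw [τ.map_comp, hw, hh']
  -- τ is surjective on Hom(X, Q) for Q ∈ add T
  have surjA : ∀ (X Q : C), InAdd T Q →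
      Function.Surjective (fun u : X ⟶ Q => τ.map u) := by
    intro X Q hQ u'
    obtain ⟨I, K, i, p, ω, hω, hIadd, hIproj, hIinj⟩ := coresol X
    have hω' := τ_realize ω i p hω
    obtain ⟨γ, hγ⟩ := (bijEQ K Q hQ).surjective
      (((σ'.E.obj (op (τ.obj K))).map u') (τE K X ω))
    have h2 : ((σ.E.map p.op).app Q) γ = 0 := hIproj Q _
    obtain ⟨w, hwω⟩ := σ.ex₆ ω i p hω γ h2
    have h3 : ((σ'.E.obj (op (τ.obj K))).map (u' - τ.map w)) (τE K X ω) = 0 := by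
      rw [map_sub_cov σ', ← τE_natr, hwω, hγ, sub_self]
    obtain ⟨h', hih⟩ := σ'.ex₅ (τE K X ω) (τ.map i) (τ.map p) hω' (u' - τ.map w) h3
    obtain ⟨h₀, hh₀⟩ := (bij1 hIadd hQ).surjective h'
    replace hh₀ : τ.map h₀ = h' := hh₀
    refine ⟨w + i ≫ h₀, ?_⟩
    show τ.map _ = u'
    rw [τ.map_add, τ.map_comp, hh₀, hih]
    abel
  -- τ is injective on Hom(X, Q) for Q ∈ add T
  have injA : ∀ (X Q : C), InAdd T Q →
      Function.Injective (fun u : X ⟶ Q => τ.map u) := by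
    intro X Q hQ u v huv
    rw [← sub_eq_zero]
    set u0 := u - v with hu0
    have hτ : τ.map u0 = 0 := by
      rw [hu0, τ.map_sub, show τ.map u = τ.map v from huv, sub_self]
    obtain ⟨I, K, i, p, ω, hω, hIadd, hIproj, hIinj⟩ := coresol X
    have hω' := τ_realize ω i p hω
    have h2 : ((σ.E.obj (op K)).map u0) ω = 0 := by
      apply (bijEQ K Q hQ).injective
      rw [map_zero, τE_natr, hτ, map_zero_cov σ']
    obtain ⟨u₁, hu₁⟩ := σ.ex₅ ω i p hω u0 h2
    have h3 : τ.map i ≫ τ.map u₁ = 0 := by rw [← τ.map_comp, hu₁, hτ]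
    obtain ⟨h'', hh''⟩ := σ'.ex₄ (τE K X ω) (τ.map i) (τ.map p) hω' (τ.map u₁) h3
    obtain ⟨h₀, hh₀⟩ := surjA K Q hQ h''
    replace hh₀ : τ.map h₀ = h'' := hh₀
    have h4 : u₁ = p ≫ h₀ := by
      apply (bij1 hIadd hQ).injective
      show τ.map u₁ = τ.map (p ≫ h₀)
      rw [τ.map_comp, hh₀, hh'']
    rw [← hu₁, h4, ← Category.assoc, σ.comp_zero ω i p hω, zero_comp]
  -- τE is bijective on E(P, Y) for P ∈ add T
  have bijPE : ∀ (P Y : C), InAdd T P → Function.Bijective (τE P Y) := by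
    intro P Y hP
    obtain ⟨I, K, i, p, ω, hω, hIadd, hIproj, hIinj⟩ := coresol Y
    have hω' := τ_realize ω i p hω
    constructor
    · intro γ₁ γ₂ hγ12
      rw [← sub_eq_zero]
      set γ := γ₁ - γ₂ with hγdef
      have hγ0 : τE P Y γ = 0 := by rw [hγdef, map_sub, hγ12, sub_self]
      have h1 : ((σ.E.obj (op P)).map i) γ = 0 := vanC hP hIadd _
      obtain ⟨h, hh⟩ := σ.ex₃ ω i p hω γ h1
      have h2 : ((σ'.E.map (τ.map h).op).app (τ.obj Y)) (τE K Y ω) = 0 := by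
        rw [← τE_natl, hh, hγ0]
      obtain ⟨w', hw'⟩ := σ'.ex₂ (τE K Y ω) (τ.map i) (τ.map p) hω' (τ.map h) h2
      obtain ⟨w, hw⟩ := (bijB P I hP).surjective w'
      replace hw : τ.map w = w' := hw
      have h3 : h = w ≫ p := by
        apply (bijB P K hP).injective
        show τ.map h = τ.map (w ≫ p)
        rw [τ.map_comp, hw, hw']
      have h4 : ((σ.E.map p.op).app Y) ω = 0 := by
        have h5 := σ.ex₂' ω i p hω (𝟙 I)
        rwa [Category.id_comp] at h5
      rw [← hh, h3, Em_comp σ, h4, map_zero]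
    · intro β'
      have h1 : ((σ'.E.obj (op (τ.obj P))).map (τ.map i)) β' = 0 :=
        vanC' (addT' hP) (addT' hIadd) _
      obtain ⟨h', hh'⟩ := σ'.ex₃ (τE K Y ω) (τ.map i) (τ.map p) hω' β' h1
      obtain ⟨h, hh⟩ := (bijB P K hP).surjective h'
      replace hh : τ.map h = h' := hh
      refine ⟨((σ.E.map h.op).app Y) ω, ?_⟩
      rw [τE_natl, hh, hh']
  -- τE is injective everywhere
  have injE : ∀ (X Y : C), Function.Injective (τE X Y) := by
    intro X Y γ₁ γ₂ hγ12
    rw [← sub_eq_zero]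
    set γ := γ₁ - γ₂ with hγdef
    have hγ0 : τE X Y γ = 0 := by rw [hγdef, map_sub, hγ12, sub_self]
    obtain ⟨T₁, T₀, f, g, ⟨α, hα⟩, h₁, h₀⟩ := hResol X
    have hα' := τ_realize α f g hα
    have h1 : ((σ.E.map g.op).app Y) γ = 0 := by
      apply (bijPE T₀ Y h₀).injective
      rw [τE_natl, hγ0, map_zero, map_zero]
    obtain ⟨h, hh⟩ := σ.ex₆ α f g hα γ h1
    have h2 : ((σ'.E.obj (op (τ.obj X))).map (τ.map h)) (τE X T₁ α) = 0 := by
      rw [← τE_natr, hh, hγ0]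
    obtain ⟨w', hw'⟩ := σ'.ex₅ (τE X T₁ α) (τ.map f) (τ.map g) hα' (τ.map h) h2
    obtain ⟨w, hw⟩ := (bijB T₀ Y h₀).surjective w'
    replace hw : τ.map w = w' := hw
    have h3 : h = f ≫ w := by
      apply (bijB T₁ Y h₁).injective
      show τ.map h = τ.map (f ≫ w)
      rw [τ.map_comp, hw, hw']
    rw [← hh, h3]
    exact σ.ex₅' α f g hα w
  -- τ is full
  have full : ∀ (X Y : C), Function.Surjective (fun u : X ⟶ Y => τ.map u) := by
    intro X Y u'
    obtain ⟨T₁, T₀, f, g, ⟨α, hα⟩, hT₁, hT₀⟩ := hResol X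
    have hα' := τ_realize α f g hα
    obtain ⟨S₁, S₀, uu, vv, ⟨β, hβ⟩, hS₁, hS₀⟩ := hResol Y
    have hβ' := τ_realize β uu vv hβ
    obtain ⟨v₀, hv₀⟩ := (bijB T₀ Y hT₀).surjective (τ.map g ≫ u')
    replace hv₀ : τ.map v₀ = τ.map g ≫ u' := hv₀
    have h2 : f ≫ v₀ = 0 := by
      apply (bijB T₁ Y hT₁).injective
      show τ.map (f ≫ v₀) = τ.map 0
      rw [τ.map_comp, hv₀, ← Category.assoc, ← τ.map_comp, σ.comp_zero α f g hα,
        τ.map_zero, zero_comp, τ.map_zero]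
    obtain ⟨u₀, hu₀⟩ := σ.ex₄ α f g hα v₀ h2
    set d' := u' - τ.map u₀ with hd'
    have hgd' : τ.map g ≫ d' = 0 := by
      rw [hd', Preadditive.comp_sub, ← τ.map_comp, hu₀, hv₀, sub_self]
    set ξ' := ((σ'.E.map d'.op).app (τ.obj S₁)) (τE Y S₁ β) with hξ'
    have h6 : ((σ'.E.map (τ.map g).op).app (τ.obj S₁)) ξ' = 0 := by
      rw [hξ', ← Em_comp σ', hgd', map_zero_con σ']
    obtain ⟨h', hh'⟩ := σ'.ex₆ (τE X T₁ α) (τ.map f) (τ.map g) hα' ξ' h6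
    obtain ⟨h₀, hh₀⟩ := (bij1 hT₁ hS₁).surjective h'
    replace hh₀ : τ.map h₀ = h' := hh₀
    set ξ := ((σ.E.obj (op X)).map h₀) α with hξ
    have h9 : τE X S₁ ξ = ξ' := by rw [hξ, τE_natr, hh₀, hh']
    have h10 : ((σ.E.obj (op X)).map uu) ξ = 0 := by
      apply (bijEQ X S₀ hS₀).injective
      rw [map_zero, τE_natr, h9, hξ', E_nat σ' d' (τ.map uu) (τE Y S₁ β), ← τE_natr]
      have huuβ : ((σ.E.obj (op Y)).map uu) β = 0 := by
        have h11 := σ.ex₅' β uu vv hβ (𝟙 S₀)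
        rwa [Category.comp_id] at h11
      rw [huuβ, map_zero, map_zero]
    obtain ⟨d₁, hd₁⟩ := σ.ex₃ β uu vv hβ ξ h10
    have h12 : ((σ'.E.map (d' - τ.map d₁).op).app (τ.obj S₁)) (τE Y S₁ β) = 0 := by
      rw [map_sub_con σ', ← hξ', ← τE_natl, hd₁, h9, sub_self]
    obtain ⟨w', hw'⟩ := σ'.ex₂ (τE Y S₁ β) (τ.map uu) (τ.map vv) hβ' (d' - τ.map d₁) h12
    obtain ⟨w, hw⟩ := surjA X S₀ hS₀ w'
    replace hw : τ.map w = w' := hw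
    refine ⟨u₀ + d₁ + w ≫ vv, ?_⟩
    show τ.map _ = u'
    rw [τ.map_add, τ.map_add, τ.map_comp, hw, hw', hd']
    abel
  -- τ is faithful
  have faithful : ∀ (X Y : C), Function.Injective (fun u : X ⟶ Y => τ.map u) := by
    intro X Y u v huv
    rw [← sub_eq_zero]
    set u0 := u - v with hu0
    have hτ : τ.map u0 = 0 := by
      rw [hu0, τ.map_sub, show τ.map u = τ.map v from huv, sub_self]
    obtain ⟨I, K, i, p, ω, hω, hIadd, hIproj, hIinj⟩ := coresol X
    have hω' := τ_realize ω i p hω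
    have h1 : ((σ.E.obj (op K)).map u0) ω = 0 := by
      apply injE K Y
      rw [map_zero, τE_natr, hτ, map_zero_cov σ']
    obtain ⟨u₁, hu₁⟩ := σ.ex₅ ω i p hω u0 h1
    have h3 : τ.map i ≫ τ.map u₁ = 0 := by rw [← τ.map_comp, hu₁, hτ]
    obtain ⟨h'', hh''⟩ := σ'.ex₄ (τE K X ω) (τ.map i) (τ.map p) hω' (τ.map u₁) h3
    obtain ⟨h₀, hh₀⟩ := full K Y h''
    replace hh₀ : τ.map h₀ = h'' := hh₀
    have h4 : u₁ = p ≫ h₀ := by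
      apply (bijB I Y hIadd).injective
      show τ.map u₁ = τ.map (p ≫ h₀)
      rw [τ.map_comp, hh₀, hh'']
    rw [← hu₁, h4, ← Category.assoc, σ.comp_zero ω i p hω, zero_comp]
  -- τE is surjective everywhere
  have surjE : ∀ (X Y : C), Function.Surjective (τE X Y) := by
    intro X Y β'
    obtain ⟨I, K, i, p, ω, hω, hIadd, hIproj, hIinj⟩ := coresol Y
    have hω' := τ_realize ω i p hω
    have h0 : ((σ'.E.obj (op (τ.obj X))).map (τ.map i)) β' = 0 := by
      obtain ⟨γ₀, hγ₀⟩ := (bijEQ X I hIadd).surjective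
        (((σ'.E.obj (op (τ.obj X))).map (τ.map i)) β')
      rw [← hγ₀, hIinj X γ₀, map_zero]
    obtain ⟨h', hh'⟩ := σ'.ex₃ (τE K Y ω) (τ.map i) (τ.map p) hω' β' h0
    obtain ⟨h, hh⟩ := full X K h'
    replace hh : τ.map h = h' := hh
    refine ⟨((σ.E.map h.op).app Y) ω, ?_⟩
    rw [τE_natl, hh, hh']
  exact ⟨{ map_surjective := fun {X Y} => full X Y },
    { map_injective := fun {X Y} => faithful X Y },
    fun X Y => ⟨injE X Y, surjE X Y⟩⟩

end Stmt9
end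

section
/- Let F : C ↔ D : G be a spherical adjunction of stable ∞-categories (or an adjunction of triangulated functors with functorial cones), with unit u : id_C → GF. For every object c ∈ C, the image under F of the fiber-cofiber sequence c →^{u_c} GF(c) → T_C(c) (T_C the twist) splits, i.e. F(c) → FGF(c) → FT_C(c) is a split triangle in D. -/
/-!
STATEMENT 11: Let F : C ↔ D : G be a spherical adjunction of stable (pre)triangulated
categories, with unit u : id_C → GF, twist T_C = cof(id_C → GF) and cotwist
T_D = fib(FG → id_D), both autoequivalences.  Then for every c, applying F to the
fiber–cofiber sequence c → GF(c) → T_C(c) yields a split triangle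
F(c) → FGF(c) → F(T_C(c)): the first map admits a retraction and the second map
admits a section.
-/

open CategoryTheory Limits Pretriangulated

namespace Stmt11

universe v u

variable {C D : Type u} [Category.{v} C] [Category.{v} D]
  [HasZeroObject C] [Preadditive C] [HasShift C ℤ]
  [∀ n : ℤ, (shiftFunctor C n).Additive] [Pretriangulated C]
  [HasZeroObject D] [Preadditive D] [HasShift D ℤ]
  [∀ n : ℤ, (shiftFunctor D n).Additive] [Pretriangulated D]

theorem image_of_unit_triangle_splits
    (F : C ⥤ D) (G : D ⥤ C) [F.CommShift ℤ] [F.IsTriangulated]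
    [G.CommShift ℤ] [G.IsTriangulated]
    (adj : F ⊣ G)
    -- twist `T_C = cof(id_C → GF)` with distinguished triangles
    -- `c → GF(c) → T_C(c) → c[1]`, first map the unit
    (T_C : C ⥤ C) [T_C.IsEquivalence]
    (p : (F ⋙ G) ⟶ T_C) (q : ∀ c : C, T_C.obj c ⟶ c⟦(1:ℤ)⟧)
    (twist_tri : ∀ c : C,
      Triangle.mk (adj.unit.app c) (p.app c) (q c) ∈ distTriang C)
    -- cotwist `T_D = fib(FG → id_D)` with distinguished triangles
    -- `T_D(d) → FG(d) → d → T_D(d)[1]`, second map the counit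
    (T_D : D ⥤ D) [T_D.IsEquivalence]
    (m : T_D ⟶ (G ⋙ F)) (r : ∀ d : D, d ⟶ (T_D.obj d)⟦(1:ℤ)⟧)
    (cotwist_tri : ∀ d : D,
      Triangle.mk (m.app d) (adj.counit.app d) (r d) ∈ distTriang D)
    (c : C) :
    -- the triangle `F(c) → FGF(c) → F(T_C c)` splits:
    (∃ ret : F.obj ((F ⋙ G).obj c) ⟶ F.obj c,
      F.map (adj.unit.app c) ≫ ret = 𝟙 (F.obj c)) ∧
    (∃ sec : F.obj (T_C.obj c) ⟶ F.obj ((F ⋙ G).obj c),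
      sec ≫ F.map (p.app c) = 𝟙 (F.obj (T_C.obj c))) := by
  have hT := F.map_distinguished _ (twist_tri c)
  set T' := F.mapTriangle.obj (Triangle.mk (adj.unit.app c) (p.app c) (q c)) with hT'def
  have h1 : T'.mor₁ = F.map (adj.unit.app c) := rfl
  have h2 : T'.mor₂ = F.map (p.app c) := rfl
  have hret : F.map (adj.unit.app c) ≫ adj.counit.app (F.obj c) = 𝟙 (F.obj c) :=
    adj.left_triangle_components c
  refine ⟨⟨adj.counit.app (F.obj c), hret⟩, ?_⟩
  have hsm : IsSplitMono (F.map (adj.unit.app c)) :=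
    IsSplitMono.mk' ⟨adj.counit.app (F.obj c), hret⟩
  have hmono : Mono T'.mor₁ := by rw [h1]; exact SplitMono.mono ⟨adj.counit.app (F.obj c), hret⟩
  have hzero : T'.mor₃ = 0 := Triangle.mor₃_eq_zero_of_mono₁ _ hT hmono
  obtain ⟨sec, hsec⟩ := Triangle.coyoneda_exact₃ _ hT (𝟙 T'.obj₃) (by rw [hzero, comp_zero])
  exact ⟨sec, hsec.symm⟩

end Stmt11
end
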